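/- arXiv:2605.20475 — 8 statements merged into one kernel-verified Lean document; each statement's English description precedes it below -/
import Mathlib

section
/- If n is a unitary perfect number with 2^a ∥ n (i.e., 2^a ∣ n and 2^{a+1} ∤ n), then a + 1 = ∑_p v_2(p^{e_p} + 1), where the sum ranges over the odd primes p dividing n, e_p denotes the exponent of p in n, and v_2 denotes the 2-adic valuation. -/
def usigma (n : ℕ) : ℕ := ∑ d ∈ n.divisors.filter (fun d => Nat.Coprime d (n / d)), d

lemma prod_primeFactors_pow (n : ℕ) (hn : n ≠ 0) :
    ∏ p ∈ n.primeFactors, p ^ n.factorization p = n := by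
  rw [← Nat.support_factorization]
  exact Nat.factorization_prod_pow_eq_self hn

lemma usigma_eq_prod (n : ℕ) (hn : 0 < n) :
    usigma n = ∏ p ∈ n.primeFactors, (p ^ n.factorization p + 1) := by
  have hn0 : n ≠ 0 := hn.ne'
  have hprod := prod_primeFactors_pow n hn0
  rw [Finset.prod_add]
  simp only [Finset.prod_const_one, mul_one]
  rw [usigma]
  have hinv : ∀ d ∈ n.divisors.filter (fun d => Nat.Coprime d (n / d)),
      ∏ p ∈ d.primeFactors, p ^ n.factorization p = d := by
    intro d hd
    simp only [Finset.mem_filter, Nat.mem_divisors] at hd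
    obtain ⟨⟨⟨m, hm⟩, _⟩, hcop⟩ := hd
    have hd0 : d ≠ 0 := by rintro rfl; rw [zero_mul] at hm; exact hn0 hm
    have hm0 : m ≠ 0 := by rintro rfl; rw [mul_zero] at hm; exact hn0 hm
    have hndm : n / d = m := by rw [hm]; exact Nat.mul_div_cancel_left m (Nat.pos_of_ne_zero hd0)
    rw [hndm] at hcop
    have hfac : ∀ p ∈ d.primeFactors, n.factorization p = d.factorization p := by
      intro p hp
      have hpp : p.Prime := (Nat.mem_primeFactors.1 hp).1
      have hpd : p ∣ d := (Nat.mem_primeFactors.1 hp).2.1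
      have hmp : m.factorization p = 0 := by
        apply Nat.factorization_eq_zero_of_not_dvd
        intro hpm
        have : p ∣ Nat.gcd d m := Nat.dvd_gcd hpd hpm
        rw [hcop] at this
        have h1 := Nat.le_of_dvd one_pos this
        have h2 := hpp.two_le
        omega
      rw [hm, Nat.factorization_mul hd0 hm0]
      simp [hmp]
    calc ∏ p ∈ d.primeFactors, p ^ n.factorization p
        = ∏ p ∈ d.primeFactors, p ^ d.factorization p :=
          Finset.prod_congr rfl (fun p hp => by rw [hfac p hp])
      _ = d := prod_primeFactors_pow d hd0
  refine Finset.sum_nbij' (fun d => d.primeFactors) (fun S => ∏ p ∈ S, p ^ n.factorization p)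
    ?_ ?_ ?_ ?_ ?_
  · -- d unitary divisor → primeFactors d ∈ powerset
    intro d hd
    simp only [Finset.mem_filter, Nat.mem_divisors] at hd
    exact Finset.mem_powerset.2 (Nat.primeFactors_mono hd.1.1 hn0)
  · -- S ⊆ primeFactors → ∏ is a unitary divisor
    intro S hS
    rw [Finset.mem_powerset] at hS
    set d := ∏ p ∈ S, p ^ n.factorization p with hdd
    set m := ∏ p ∈ n.primeFactors \ S, p ^ n.factorization p with hmm
    have hdm : d * m = n := by
      rw [hdd, hmm, ← Finset.prod_union (Finset.disjoint_sdiff),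
        Finset.union_sdiff_of_subset hS]
      exact hprod
    have hd0 : d ≠ 0 := by
      intro h; rw [h, zero_mul] at hdm; exact hn0 hdm.symm
    have hndd : n / d = m := by
      rw [← hdm]; exact Nat.mul_div_cancel_left m (Nat.pos_of_ne_zero hd0)
    have hcop : Nat.Coprime d m := by
      apply Nat.Coprime.prod_left
      intro p hp
      apply Nat.Coprime.prod_right
      intro q hq
      have hps := Finset.mem_sdiff.1 hq
      have hpp : p.Prime := (Nat.mem_primeFactors.1 (hS hp)).1
      have hqp : q.Prime := (Nat.mem_primeFactors.1 hps.1).1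
      have : p ≠ q := fun h => hps.2 (h ▸ hp)
      exact Nat.Coprime.pow _ _ ((Nat.coprime_primes hpp hqp).2 this)
    simp only [Finset.mem_filter, Nat.mem_divisors]
    refine ⟨⟨⟨m, hdm.symm⟩, hn0⟩, ?_⟩
    rw [hndd]; exact hcop
  · intro d hd
    exact hinv d hd
  · -- i (j S) = S : (∏ p ∈ S, p ^ e_p).primeFactors = S
    intro S hS
    rw [Finset.mem_powerset] at hS
    ext q
    simp only [Nat.mem_primeFactors]
    constructor
    · rintro ⟨hq, hqdvd, -⟩
      obtain ⟨p, hp, hqp⟩ := (Nat.Prime.prime hq).exists_mem_finset_dvd hqdvd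
      have hpp : p.Prime := (Nat.mem_primeFactors.1 (hS hp)).1
      have := (Nat.Prime.dvd_of_dvd_pow hq hqp)
      rwa [(Nat.prime_dvd_prime_iff_eq hq hpp).1 this]
    · intro hq
      have hqp : q.Prime := (Nat.mem_primeFactors.1 (hS hq)).1
      have hqe : 0 < n.factorization q :=
        hqp.factorization_pos_of_dvd hn0 (Nat.mem_primeFactors.1 (hS hq)).2.1
      refine ⟨hqp, ?_, ?_⟩
      · exact dvd_trans (dvd_pow_self q hqe.ne') (Finset.dvd_prod_of_mem _ hq)
      · apply Finset.prod_ne_zero_iff.2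
        intro p hp
        exact pow_ne_zero _ (Nat.mem_primeFactors.1 (hS hp)).1.pos.ne'
  · intro d hd
    exact (hinv d hd).symm

/-- If `n` is a unitary perfect number with `2^a ∥ n`, then
`a + 1 = ∑_p v_2(p^{e_p} + 1)`, the sum over odd primes `p ∣ n`,
where `e_p` is the exponent of `p` in `n`. -/
theorem two_adic_balance (n a : ℕ) (hn : 0 < n) (hupn : usigma n = 2 * n)
    (hdvd : 2 ^ a ∣ n) (hndvd : ¬ 2 ^ (a + 1) ∣ n) :
    a + 1 = ∑ p ∈ n.primeFactors.filter (fun p => p ≠ 2),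
      padicValNat 2 (p ^ n.factorization p + 1) := by
  have hn0 : n ≠ 0 := hn.ne'
  have h2 : Nat.Prime 2 := Nat.prime_two
  have ha : n.factorization 2 = a := by
    have h1 : a ≤ n.factorization 2 := (h2.pow_dvd_iff_le_factorization hn0).1 hdvd
    have h2' : ¬ (a + 1 ≤ n.factorization 2) := fun h =>
      hndvd ((h2.pow_dvd_iff_le_factorization hn0).2 h)
    omega
  rw [usigma_eq_prod n hn] at hupn
  have key := congrArg (fun m => m.factorization 2) hupn.symm
  have hne : ∀ p ∈ n.primeFactors, p ^ n.factorization p + 1 ≠ 0 := fun p _ => by positivity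
  rw [Nat.factorization_prod hne, Nat.factorization_mul two_ne_zero hn0] at key
  have key2 : (∑ p ∈ n.primeFactors, (p ^ n.factorization p + 1).factorization) 2
      = 1 + n.factorization 2 := by
    rw [← key, Finsupp.add_apply]
    congr 1
    simp [h2.factorization]
  rw [Finsupp.finset_sum_apply] at key2
  rw [← Finset.sum_filter_add_sum_filter_not n.primeFactors (fun p => p ≠ 2)] at key2
  have hzero : ∑ p ∈ n.primeFactors.filter (fun p => ¬ p ≠ 2),
      (p ^ n.factorization p + 1).factorization 2 = 0 := by
    apply Finset.sum_eq_zero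
    intro p hp
    simp only [Finset.mem_filter, not_not] at hp
    obtain ⟨hpmem, rfl⟩ := hp
    have he : 0 < n.factorization 2 :=
      h2.factorization_pos_of_dvd hn0 (Nat.mem_primeFactors.1 hpmem).2.1
    apply Nat.factorization_eq_zero_of_not_dvd
    intro hdvd2
    have : (2:ℕ) ∣ 2 ^ n.factorization 2 := dvd_pow_self 2 he.ne'
    omega
  have hconv : ∀ p ∈ n.primeFactors.filter (fun p => p ≠ 2),
      (p ^ n.factorization p + 1).factorization 2
        = padicValNat 2 (p ^ n.factorization p + 1) := fun p _ =>
    Nat.factorization_def _ h2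
  rw [Finset.sum_congr rfl hconv, hzero, add_zero, ha] at key2
  omega
end

section
/- Suppose m = 2k ∈ H_even with k odd and k ≥ 1. Then: (1) every prime factor of k is a 3-Higgs prime; (2) for every prime q dividing k, v_q(k) ≤ 3; and (3) for every odd divisor d of k, 2d ∈ H_even. -/
/-- The 3-Higgs primes (OEIS A057447): `2` is 3-Higgs (vacuously, since `2 - 1 = 1` has no
prime factors), and an odd prime `p` is 3-Higgs iff every prime `q ∣ p - 1` is 3-Higgs and
occurs in `p - 1` with exponent at most `3`. -/
inductive Higgs3 : ℕ → Prop
  | mk (p : ℕ) (hp : p.Prime)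
      (hrec : ∀ q : ℕ, q.Prime → q ∣ (p - 1) → Higgs3 q)
      (hexp : ∀ q : ℕ, q.Prime → q ∣ (p - 1) → (p - 1).factorization q ≤ 3) :
      Higgs3 p

/-- `H = { m ≥ 1 : every prime factor of 2^m + 1 is 3-Higgs }`. -/
def Hset : Set ℕ := {m | 1 ≤ m ∧ ∀ q : ℕ, q.Prime → q ∣ 2 ^ m + 1 → Higgs3 q}

/-- `H_even = H ∩ 2ℤ`. -/
def Heven : Set ℕ := Hset ∩ {m | 2 ∣ m}

lemma aux_dvd (d k : ℕ) (hd : d ∣ k) (hk : Odd k) :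
    2 ^ (2 * d) + 1 ∣ 2 ^ (2 * k) + 1 := by
  obtain ⟨c, rfl⟩ := hd
  have hc : Odd c := (Nat.odd_mul.mp hk).2
  have h := Odd.nat_add_dvd_pow_add_pow (2 ^ (2 * d)) 1 hc
  simpa [← pow_mul, mul_assoc] using h

lemma aux_size (x q : ℕ) (hx : 4 ≤ x) (hq : 3 ≤ q) : (x + 1) * q < x ^ q + 1 := by
  obtain ⟨t, rfl⟩ : ∃ t, q = t + 3 := ⟨q - 3, by omega⟩
  have h1 : t + 1 ≤ x ^ t :=
    le_trans (Nat.lt_two_pow_self (n := t)) (Nat.pow_le_pow_left (by omega) t)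
  have h4 : 2 * (t + 3) ≤ 16 * x ^ t := by omega
  calc (x + 1) * (t + 3) ≤ (2 * x) * (t + 3) := by
        apply Nat.mul_le_mul_right; omega
    _ = x * (2 * (t + 3)) := by ring
    _ ≤ x * (16 * x ^ t) := Nat.mul_le_mul_left x h4
    _ ≤ x * (x * x * x ^ t) := by
        apply Nat.mul_le_mul_left
        apply Nat.mul_le_mul_right
        nlinarith
    _ = x ^ (t + 3) := by ring
    _ < x ^ (t + 3) + 1 := Nat.lt_succ_self _

lemma aux_exists (q : ℕ) (hq : q.Prime) (hq2 : q ≠ 2) (x : ℕ) (hx : 4 ≤ x)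
    (hxe : 2 ∣ x) : ∃ p : ℕ, p.Prime ∧ p ∣ x ^ q + 1 ∧ ¬ p ∣ x + 1 := by
  by_contra hcon
  push_neg at hcon
  have hq3 : 3 ≤ q := by have := hq.two_le; omega
  have hqodd : Odd q := hq.odd_of_ne_two hq2
  have hB0 : x ^ q + 1 ≠ 0 := by positivity
  have hA0 : x + 1 ≠ 0 := by omega
  have hq0 : q ≠ 0 := hq.ne_zero
  have hAq0 : (x + 1) * q ≠ 0 := by positivity
  have hBodd : Odd (x ^ q + 1) := by
    have : 2 ∣ x ^ q := hxe.trans (dvd_pow_self x hq0)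
    rcases this with ⟨c, hc⟩
    exact ⟨c, by omega⟩
  have hdvd : x ^ q + 1 ∣ (x + 1) * q := by
    rw [← Nat.factorization_le_iff_dvd hB0 hAq0]
    intro r
    by_cases hr : r.Prime
    · by_cases hrB : r ∣ x ^ q + 1
      · have hrA : r ∣ x + 1 := hcon r hr hrB
        have hr2 : r ≠ 2 := by
          rintro rfl
          exact (Nat.not_even_iff_odd.mpr hBodd) (even_iff_two_dvd.mpr hrB)
        have hrx : ¬ r ∣ x := by
          intro hdx
          have h1 : r ∣ 1 := by simpa using Nat.dvd_sub hrA hdx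
          exact hr.one_lt.ne' (Nat.dvd_one.mp h1)
        haveI : Fact r.Prime := ⟨hr⟩
        have lte := padicValNat.pow_add_pow (x := x) (y := 1) (p := r)
          (hr.odd_of_ne_two hr2) (by simpa using hrA) hrx hqodd
        rw [one_pow] at lte
        have heq : (x ^ q + 1).factorization r
            = (x + 1).factorization r + q.factorization r := by
          rw [Nat.factorization_def _ hr, Nat.factorization_def _ hr,
            Nat.factorization_def _ hr, lte]
        rw [heq, Nat.factorization_mul hA0 hq0, Finsupp.add_apply]
      · simp [Nat.factorization_eq_zero_of_not_dvd hrB]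
    · simp [Nat.factorization_eq_zero_of_not_prime _ hr]
  have hle := Nat.le_of_dvd (by positivity) hdvd
  have := aux_size x q hx hq3
  omega

lemma aux_key (q : ℕ) (hq : q.Prime) (hq2 : q ≠ 2) (f : ℕ) :
    ∃ p : ℕ, p.Prime ∧ p ∣ 2 ^ (2 * q ^ (f + 1)) + 1 ∧ 4 * q ^ (f + 1) ∣ p - 1 := by
  set x : ℕ := 2 ^ (2 * q ^ f) with hxdef
  have hxe : 2 ∣ x :=
    dvd_pow_self 2 (Nat.mul_ne_zero two_ne_zero (pow_ne_zero _ hq.ne_zero))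
  have hx4 : 4 ≤ x := by
    have h1 : 1 ≤ q ^ f := Nat.one_le_pow _ _ hq.pos
    calc (4 : ℕ) = 2 ^ (2 * 1) := by norm_num
      _ ≤ 2 ^ (2 * q ^ f) := Nat.pow_le_pow_right (by norm_num) (by omega)
  have hBx : 2 ^ (2 * q ^ (f + 1)) = x ^ q := by
    rw [hxdef, ← pow_mul]
    ring_nf
  obtain ⟨p, hp, hpB, hpA⟩ := aux_exists q hq hq2 x hx4 hxe
  refine ⟨p, hp, by rw [hBx]; exact hpB, ?_⟩
  have hBodd : Odd (x ^ q + 1) := by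
    rcases hxe.trans (dvd_pow_self x hq.ne_zero) with ⟨c, hc⟩
    exact ⟨c, by omega⟩
  have hp2 : p ≠ 2 := by
    rintro rfl
    exact (Nat.not_even_iff_odd.mpr hBodd) (even_iff_two_dvd.mpr hpB)
  haveI : Fact p.Prime := ⟨hp⟩
  haveI : Fact (2 < p) := ⟨by have := hp.two_le; omega⟩
  have hneg : (2 : ZMod p) ^ (2 * q ^ (f + 1)) = -1 := by
    have h0 : ((2 ^ (2 * q ^ (f + 1)) + 1 : ℕ) : ZMod p) = 0 :=
      (ZMod.natCast_eq_zero_iff _ p).mpr (by rw [hBx]; exact hpB)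
    push_cast at h0
    linear_combination h0
  set o : ℕ := orderOf (2 : ZMod p) with hodef
  have ho1 : o ∣ 4 * q ^ (f + 1) := by
    apply orderOf_dvd_of_pow_eq_one
    rw [show (4 : ℕ) * q ^ (f + 1) = (2 * q ^ (f + 1)) * 2 by ring, pow_mul, hneg]
    ring
  have hone : (-1 : ZMod p) ≠ 1 := ZMod.neg_one_ne_one
  have ho2 : ¬ o ∣ 2 * q ^ (f + 1) := by
    intro h
    have := orderOf_dvd_iff_pow_eq_one.mp h
    rw [hneg] at this
    exact hone this
  have hxc : ((x : ℕ) : ZMod p) = (2 : ZMod p) ^ (2 * q ^ f) := by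
    rw [hxdef]; push_cast; ring
  have ho3 : ¬ o ∣ 4 * q ^ f := by
    intro h
    have h4 : (2 : ZMod p) ^ (4 * q ^ f) = 1 := orderOf_dvd_iff_pow_eq_one.mp h
    have hx2 : ((x : ℕ) : ZMod p) ^ 2 = 1 := by
      rw [hxc, ← pow_mul, show 2 * q ^ f * 2 = 4 * q ^ f by ring]
      exact h4
    have hfac : (((x : ℕ) : ZMod p) - 1) * (((x : ℕ) : ZMod p) + 1) = 0 := by
      linear_combination hx2
    rcases mul_eq_zero.mp hfac with h1 | h1
    · have hx1 : (2 : ZMod p) ^ (2 * q ^ f) = 1 := by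
        rw [← hxc]; linear_combination h1
      have := orderOf_dvd_of_pow_eq_one hx1
      exact ho2 (this.trans (mul_dvd_mul_left 2 (pow_dvd_pow q (by omega))))
    · have : ((x + 1 : ℕ) : ZMod p) = 0 := by push_cast; linear_combination h1
      exact hpA ((ZMod.natCast_eq_zero_iff _ p).mp this)
  have hofull : 4 * q ^ (f + 1) ∣ o := by
    obtain ⟨a, b, ha, hb, hab⟩ := exists_dvd_and_dvd_of_dvd_mul ho1
    obtain ⟨j, hj, rfl⟩ := (Nat.dvd_prime_pow hq).mp hb
    have ha4 : a = 4 := by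
      by_contra hne
      have hle : a ≤ 4 := Nat.le_of_dvd (by norm_num) ha
      have ha2 : a ∣ 2 := by
        interval_cases a <;>
          first
          | decide
          | (exact absurd rfl hne)
          | (exact absurd ha (by decide))
      exact ho2 (by rw [hab]; exact mul_dvd_mul ha2 (pow_dvd_pow q hj))
    have hje : j = f + 1 := by
      by_contra hne
      exact ho3 (by rw [hab, ha4]; exact mul_dvd_mul_left 4 (pow_dvd_pow q (by omega)))
    rw [hab, ha4, hje]
  have hfermat : (2 : ZMod p) ^ (p - 1) = 1 := by
    apply ZMod.pow_card_sub_one_eq_one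
    intro h
    have h0 : ((2 : ℕ) : ZMod p) = 0 := by push_cast; exact h
    have hd := (ZMod.natCast_eq_zero_iff 2 p).mp h0
    rcases (Nat.prime_dvd_prime_iff_eq hp Nat.prime_two).mp hd with rfl
    exact hp2 rfl
  exact hofull.trans (orderOf_dvd_of_pow_eq_one hfermat)

/-- Structural lemma: if `m = 2k ∈ H_even` with `k` odd and `k ≥ 1`, then
(1) every prime factor of `k` is 3-Higgs, (2) every prime `q ∣ k` has `v_q(k) ≤ 3`,
and (3) every odd divisor `d ∣ k` satisfies `2d ∈ H_even`. -/
theorem Heven_structural (k : ℕ) (hk : 1 ≤ k) (hkodd : Odd k) (hm : 2 * k ∈ Heven) :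
    (∀ q : ℕ, q.Prime → q ∣ k → Higgs3 q) ∧
    (∀ q : ℕ, q.Prime → q ∣ k → k.factorization q ≤ 3) ∧
    (∀ d : ℕ, d ∣ k → Odd d → 2 * d ∈ Heven) := by
  obtain ⟨⟨hm1, hmH⟩, -⟩ := hm
  have hk0 : k ≠ 0 := by omega
  -- helper: any prime dividing 2^(2d)+1 for d ∣ k is 3-Higgs
  have hHd : ∀ d : ℕ, d ∣ k → ∀ p : ℕ, p.Prime → p ∣ 2 ^ (2 * d) + 1 → Higgs3 p := by
    intro d hd p hp hpd
    exact hmH p hp (hpd.trans (aux_dvd d k hd hkodd))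
  have hqne2 : ∀ q : ℕ, q.Prime → q ∣ k → q ≠ 2 := by
    intro q hq hqk h
    rw [h] at hqk
    exact (Nat.not_even_iff_odd.mpr hkodd) (even_iff_two_dvd.mpr hqk)
  refine ⟨?_, ?_, ?_⟩
  · -- (1)
    intro q hq hqk
    have hq2 := hqne2 q hq hqk
    obtain ⟨p, hp, hpB, hdvd⟩ := aux_key q hq hq2 0
    rw [pow_one] at hpB hdvd
    have hqd : q ∣ k := hqk
    have hHp : Higgs3 p := hHd q hqd p hp hpB
    cases hHp with
    | mk p hp' hrec hexp =>
      exact hrec q hq ((dvd_mul_left q 4).trans hdvd)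
  · -- (2)
    intro q hq hqk
    have hq2 := hqne2 q hq hqk
    set e := k.factorization q with he
    have he1 : 1 ≤ e := (Nat.Prime.factorization_pos_of_dvd hq hk0 hqk)
    have hqe : q ^ e ∣ k := Nat.ordProj_dvd k q
    obtain ⟨f, hf⟩ : ∃ f, e = f + 1 := ⟨e - 1, by omega⟩
    obtain ⟨p, hp, hpB, hdvd⟩ := aux_key q hq hq2 f
    rw [← hf] at hpB hdvd
    have hHp : Higgs3 p := hHd (q ^ e) hqe p hp hpB
    have hp1 : p - 1 ≠ 0 := by have := hp.two_le; omega
    have hqp : q ∣ p - 1 :=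
      (dvd_pow_self q (by omega)).trans ((dvd_mul_left _ 4).trans hdvd)
    have hqep : q ^ e ∣ p - 1 := (dvd_mul_left _ 4).trans hdvd
    have hle : e ≤ (p - 1).factorization q :=
      (Nat.Prime.pow_dvd_iff_le_factorization hq hp1).mp hqep
    cases hHp with
    | mk p hp' hrec hexp =>
      exact le_trans hle (hexp q hq hqp)
  · -- (3)
    intro d hd hdodd
    have hd0 : d ≠ 0 := by
      rintro rfl
      simp at hdodd
    refine ⟨⟨by omega, ?_⟩, ⟨d, rfl⟩⟩
    intro p hp hpd
    exact hHd d hd p hp hpd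
end

section
/- Every element of H_even is congruent to 2 modulo 4; that is, H_even ⊆ { m : m ≡ 2 (mod 4) }. -/
/-- Key lemma: if a prime `q` satisfying the Higgs3 recursion divides `2^m+1`, and `8 ∣ m`,
we get a contradiction. -/
lemma aux_not_higgs3 {q : ℕ} (hq : q.Prime) (h16 : 2 ^ 4 ∣ q - 1)
    (hh : Higgs3 q) : False := by
  cases hh with
  | mk p hp hrec hexp =>
    have h16' : (16:ℕ) ∣ q - 1 := by norm_num at h16; exact h16
    have hq3 : 3 ≤ q := by
      have := hq.two_le
      omega
    have h2 : (2 : ℕ) ∣ q - 1 := dvd_trans (by norm_num) h16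
    have hle := hexp 2 Nat.prime_two h2
    have h4 : 4 ≤ (q - 1).factorization 2 :=
      (Nat.Prime.pow_dvd_iff_le_factorization Nat.prime_two (by omega)).mp h16
    omega

/-- Fermat-prime obstruction: every element of `H_even` is congruent to `2` mod `4`. -/
theorem Heven_mod_four : Heven ⊆ {m : ℕ | m % 4 = 2} := by
  rintro m ⟨⟨hm1, hH⟩, hev⟩
  by_contra h4
  simp only [Set.mem_setOf_eq] at h4
  obtain ⟨k, hk⟩ := hev
  have h8 : m % 8 = 0 ∨ m % 8 = 4 := by omega
  rcases h8 with h8 | h8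
  · -- 8 ∣ m case: use a prime factor of 2^m + 1
    have hm8 : 8 ∣ m := Nat.dvd_of_mod_eq_zero h8
    set N := 2 ^ m + 1 with hN
    have hN1 : N ≠ 1 := by
      have : 2 ≤ 2 ^ m := Nat.one_lt_two_pow_iff.mpr (by omega)
      omega
    have hq : N.minFac.Prime := Nat.minFac_prime hN1
    set q := N.minFac with hqdef
    have hqd : q ∣ 2 ^ m + 1 := Nat.minFac_dvd N
    have hq2 : q ≠ 2 := by
      intro h
      have hodd : ¬ (2 ∣ 2 ^ m + 1) := by
        intro hdvd
        have : (2:ℕ) ∣ 2 ^ m := dvd_pow_self 2 (by omega)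
        omega
      exact hodd (h ▸ hqd)
    have hq3 : 3 ≤ q := by
      have := hq.two_le
      omega
    haveI : Fact q.Prime := ⟨hq⟩
    haveI : Fact (2 < q) := ⟨by omega⟩
    have hcast : (2 : ZMod q) ^ m = -1 := by
      have h0 : ((2 ^ m + 1 : ℕ) : ZMod q) = 0 :=
        (ZMod.natCast_eq_zero_iff _ _).mpr hqd
      push_cast at h0
      linear_combination h0
    have h2ne : (2 : ZMod q) ≠ 0 := by
      intro h0
      have : ((2 : ℕ) : ZMod q) = 0 := by exact_mod_cast h0
      have : q ∣ 2 := (ZMod.natCast_eq_zero_iff _ _).mp this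
      have := Nat.le_of_dvd (by norm_num) this
      omega
    set d := orderOf (2 : ZMod q) with hddef
    have hd2m : d ∣ 2 * m := by
      apply orderOf_dvd_of_pow_eq_one
      rw [mul_comm, pow_mul, hcast]
      ring
    have hdm : ¬ d ∣ m := by
      intro h
      have := orderOf_dvd_iff_pow_eq_one.mp h
      rw [hcast] at this
      exact ZMod.neg_one_ne_one this
    -- write m = 2^e * u with u odd
    obtain ⟨e, u, hu_odd, hm_eq⟩ := Nat.exists_eq_two_pow_mul_odd (show m ≠ 0 by omega)
    have hu2 : ¬ (2 ∣ u) := by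
      rw [Nat.odd_iff] at hu_odd; omega
    have hcop : Nat.Coprime (2 ^ 3) u :=
      Nat.Coprime.pow_left _ ((Nat.prime_two.coprime_iff_not_dvd).mpr hu2)
    have he3 : 3 ≤ e := by
      have h1 : (2:ℕ) ^ 3 ∣ 2 ^ e * u := by
        rw [← hm_eq]; exact_mod_cast hm8
      have h2 : (2:ℕ) ^ 3 ∣ 2 ^ e := (Nat.Coprime.dvd_of_dvd_mul_right hcop) h1
      exact (Nat.pow_dvd_pow_iff_le_right (by norm_num)).mp h2
    have hd' : d ∣ 2 ^ (e + 1) * u := by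
      have : 2 * m = 2 ^ (e + 1) * u := by rw [hm_eq]; ring
      rwa [this] at hd2m
    obtain ⟨d1, d2, hd1, hd2, hd12⟩ := Nat.dvd_mul.mp hd'
    obtain ⟨i, hi, rfl⟩ := (Nat.dvd_prime_pow Nat.prime_two).mp hd1
    have hie : i = e + 1 := by
      by_contra hne
      have hie' : i ≤ e := by omega
      exact hdm (by rw [← hd12, hm_eq]
                    exact mul_dvd_mul (pow_dvd_pow 2 hie') hd2)
    have h2e1d : 2 ^ 4 ∣ d := by
      rw [← hd12, hie]
      exact dvd_mul_of_dvd_left (pow_dvd_pow 2 (by omega)) _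
    have hdq : d ∣ q - 1 :=
      orderOf_dvd_of_pow_eq_one (ZMod.pow_card_sub_one_eq_one h2ne)
    exact aux_not_higgs3 hq (dvd_trans h2e1d hdq) (hH q hq hqd)
  · -- m ≡ 4 (mod 8) case: 17 divides 2^m + 1
    have h17 : (17 : ℕ) ∣ 2 ^ m + 1 := by
      obtain ⟨j, rfl⟩ : ∃ j, m = 8 * j + 4 := ⟨m / 8, by omega⟩
      have : (2:ℕ) ^ (8 * j + 4) + 1 ≡ 1 ^ j * 2 ^ 4 + 1 [MOD 17] := by
        have heq : (2:ℕ) ^ (8 * j + 4) + 1 = (2 ^ 8) ^ j * 2 ^ 4 + 1 := by rw [pow_add, pow_mul]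
        rw [heq]
        exact Nat.ModEq.add_right _ (Nat.ModEq.mul_right _ (Nat.ModEq.pow _ (by decide)))
      have h0 : (2:ℕ) ^ (8 * j + 4) + 1 ≡ 0 [MOD 17] := by
        exact this.trans (by norm_num [Nat.ModEq])
      exact (Nat.modEq_zero_iff_dvd).mp h0
    have hh := hH 17 (by norm_num) h17
    exact aux_not_higgs3 (by norm_num) (by norm_num) hh
end

section
/- Let k ≥ 2 and let q be any prime divisor of the Fermat number F_k = 2^{2^k} + 1. Then q ≡ 1 (mod 2^{k+2}); in particular v_2(q − 1) ≥ k + 2 > 3. -/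
/-- (Lucas) If `k ≥ 2` and `q` is a prime divisor of the Fermat number `F_k = 2^(2^k) + 1`,
then `q ≡ 1 (mod 2^(k+2))`; in particular `v_2(q - 1) ≥ k + 2 > 3`. -/
theorem fermat_factor_mod (k q : ℕ) (hk : 2 ≤ k) (hq : q.Prime)
    (hdvd : q ∣ 2 ^ 2 ^ k + 1) :
    q ≡ 1 [MOD 2 ^ (k + 2)] ∧ k + 2 ≤ padicValNat 2 (q - 1) ∧
      3 < padicValNat 2 (q - 1) := by
  obtain ⟨m, hm⟩ := Nat.fermat_primeFactors_one_lt k q (by omega) hq hdvd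
  have hm0 : m ≠ 0 := by
    rintro rfl
    simp at hm
    exact hq.one_lt.ne' hm
  have h1 : q ≡ 1 [MOD 2 ^ (k + 2)] := by
    exact ((Nat.modEq_iff_dvd' hq.one_le).mpr
      ⟨m, by rw [hm, Nat.add_sub_cancel, mul_comm]⟩).symm
  have hdvd2 : 2 ^ (k + 2) ∣ q - 1 := ⟨m, by rw [hm, Nat.add_sub_cancel, mul_comm]⟩
  have hne : q - 1 ≠ 0 := by have := hq.one_lt; omega
  have : Fact (Nat.Prime 2) := ⟨Nat.prime_two⟩
  have h2 : k + 2 ≤ padicValNat 2 (q - 1) :=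
    (padicValNat_dvd_iff_le hne).mp hdvd2
  exact ⟨h1, h2, by omega⟩
end

section
/- H_even is finite if and only if the set H_even^prime := { m = 2p ∈ H_even : p an odd prime } is finite. More precisely, if H_even^prime has cardinality N, then |H_even| ≤ 4^N. -/
/-- `H_even^prime`: elements of `H_even` of the form `2p` with `p` an odd prime. -/
def HevenPrime : Set ℕ := {m ∈ Heven | ∃ p : ℕ, p.Prime ∧ Odd p ∧ m = 2 * p}

lemma pow_add_one_dvd {a m : ℕ} (h0 : 0 < a) (ha : a ∣ m) (hodd : Odd (m / a)) :
    2 ^ a + 1 ∣ 2 ^ m + 1 := by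
  obtain ⟨k, rfl⟩ := ha
  rw [Nat.mul_div_cancel_left _ h0] at hodd
  have := Odd.nat_add_dvd_pow_add_pow (2 ^ a) 1 hodd
  simpa [← pow_mul] using this
lemma higgs_no_pow4 {q r : ℕ} (h : Higgs3 q) (hr : r.Prime) (hdvd : r ^ 4 ∣ q - 1) : False := by
  obtain ⟨q, hq, _, hexp⟩ := h
  have hq1 : q - 1 ≠ 0 := by have := hq.two_le; omega
  have hrd : r ∣ q - 1 := dvd_trans (dvd_pow_self r (by norm_num)) hdvd
  have h4 : 4 ≤ (q - 1).factorization r :=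
    (Nat.Prime.pow_dvd_iff_le_factorization hr hq1).mp hdvd
  have := hexp r hr hrd
  omega
lemma ord_lemma {q n : ℕ} (hq : q.Prime) (hn : 0 < n) (hdvd : q ∣ 2 ^ n + 1) :
    q ≠ 2 ∧ orderOf (2 : ZMod q) ∣ 2 * n ∧ ¬ orderOf (2 : ZMod q) ∣ n ∧
      orderOf (2 : ZMod q) ∣ q - 1 ∧ orderOf (2 : ZMod q) ≠ 0 := by
  haveI : Fact q.Prime := ⟨hq⟩
  have hq2 : q ≠ 2 := by
    rintro rfl
    have h1 : (2:ℕ) ∣ 2 ^ n := dvd_pow_self 2 hn.ne'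
    have := (Nat.dvd_add_right h1).mp hdvd
    norm_num at this
  have hq3 : 3 ≤ q := by have := hq.two_le; omega
  have hne : (-1 : ZMod q) ≠ 1 := by
    intro h
    have h2 : ((2:ℕ) : ZMod q) = 0 := by
      push_cast
      linear_combination -h
    have := (ZMod.natCast_eq_zero_iff _ _).mp h2
    have := Nat.le_of_dvd (by norm_num) this
    omega
  have hcast : (2 : ZMod q) ^ n = -1 := by
    have h0 : ((2 ^ n + 1 : ℕ) : ZMod q) = 0 :=
      (ZMod.natCast_eq_zero_iff _ _).mpr hdvd
    push_cast at h0
    linear_combination h0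
  have h2n : orderOf (2 : ZMod q) ∣ 2 * n := by
    apply orderOf_dvd_of_pow_eq_one
    rw [mul_comm, pow_mul, hcast]
    ring
  have hnn : ¬ orderOf (2 : ZMod q) ∣ n := by
    intro h
    rw [orderOf_dvd_iff_pow_eq_one] at h
    rw [hcast] at h
    exact hne h
  have h20 : (2 : ZMod q) ≠ 0 := by
    intro h
    have h2 : ((2:ℕ) : ZMod q) = 0 := by push_cast; exact h
    have := (ZMod.natCast_eq_zero_iff _ _).mp h2
    have := Nat.le_of_dvd (by norm_num) this
    omega
  have hq1 : orderOf (2 : ZMod q) ∣ q - 1 := ZMod.orderOf_dvd_card_sub_one h20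
  refine ⟨hq2, h2n, hnn, hq1, ?_⟩
  intro h0
  rw [h0] at hq1
  have := eq_zero_of_zero_dvd hq1
  omega
lemma two_pow_dvd_of {d m : ℕ} (hm : m ≠ 0) (hd : d ≠ 0) (h1 : d ∣ 2 * m) (h2 : ¬ d ∣ m) :
    2 ^ (m.factorization 2 + 1) ∣ d := by
  by_contra h
  rw [Nat.Prime.pow_dvd_iff_le_factorization Nat.prime_two hd] at h
  push_neg at h
  apply h2
  rw [← Nat.factorization_le_iff_dvd hd hm]
  have hle : d.factorization ≤ (2 * m).factorization :=
    (Nat.factorization_le_iff_dvd hd (by positivity)).mpr h1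
  intro r
  rcases eq_or_ne r 2 with rfl | hr
  · omega
  · have := hle r
    rwa [Nat.factorization_mul (by norm_num) hm, Finsupp.add_apply,
      Nat.Prime.factorization Nat.prime_two, Finsupp.single_apply,
      if_neg (fun h' => hr h'.symm), zero_add] at this

lemma dvd_4p3_of {p d : ℕ} (hp : p.Prime) (hp2 : p ≠ 2) (hd : d ≠ 0)
    (h1 : d ∣ 4 * p ^ 4) (h2 : ¬ p ^ 4 ∣ d) : d ∣ 4 * p ^ 3 := by
  rw [Nat.Prime.pow_dvd_iff_le_factorization hp hd] at h2
  push_neg at h2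
  have hp0 : p ≠ 0 := hp.pos.ne'
  have hle : d.factorization ≤ (4 * p ^ 4).factorization :=
    (Nat.factorization_le_iff_dvd hd (by positivity)).mpr h1
  rw [← Nat.factorization_le_iff_dvd hd (by positivity)]
  intro r
  have key : ∀ k : ℕ, (4 * p ^ k).factorization r =
      (if r = 2 then 2 else 0) + (if r = p then k else 0) := by
    intro k
    rw [show (4:ℕ) = 2^2 by norm_num, Nat.factorization_mul (by norm_num) (by positivity),
      Finsupp.add_apply, Nat.Prime.factorization_pow Nat.prime_two,
      Nat.Prime.factorization_pow hp, Finsupp.single_apply, Finsupp.single_apply]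
    simp [eq_comm]
  rcases eq_or_ne r p with rfl | hr
  · rw [key]
    simp [hp2]
    omega
  · have := hle r
    rw [key] at this
    rw [key]
    simpa [hr] using this
lemma p4_dvd_sub_one {p q : ℕ} (hp : p.Prime) (hp2 : p ≠ 2) (hq : q.Prime)
    (hqM : q ∣ 2 ^ (2 * p ^ 4) + 1) (hqB : ¬ q ∣ 2 ^ (2 * p ^ 3) + 1) :
    p ^ 4 ∣ q - 1 := by
  haveI : Fact q.Prime := ⟨hq⟩
  have hp0 : 0 < p := hp.pos
  obtain ⟨hq2, h2n, hnn, hq1, hord0⟩ := ord_lemma hq (by positivity) hqM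
  set d := orderOf (2 : ZMod q) with hd
  have h1 : d ∣ 4 * p ^ 4 := by
    have : 2 * (2 * p ^ 4) = 4 * p ^ 4 := by ring
    rwa [this] at h2n
  by_contra hp4
  have hpd : ¬ p ^ 4 ∣ d := fun h => hp4 (h.trans hq1)
  have h3 : d ∣ 4 * p ^ 3 := dvd_4p3_of hp hp2 hord0 h1 hpd
  have hpow : (2 : ZMod q) ^ (4 * p ^ 3) = 1 := by
    rw [← orderOf_dvd_iff_pow_eq_one]; exact h3
  have hsq : ((2 : ZMod q) ^ (2 * p ^ 3)) * ((2 : ZMod q) ^ (2 * p ^ 3)) = 1 := by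
    rw [← pow_add, ← hpow]; ring_nf
  rcases mul_self_eq_one_iff.mp hsq with h | h
  · -- 2^(2p^3) = 1, so d ∣ 2p^3 ∣ 2p^4, contradiction with hnn
    have : d ∣ 2 * p ^ 3 := orderOf_dvd_of_pow_eq_one h
    exact hnn (this.trans (by
      apply mul_dvd_mul_left
      exact pow_dvd_pow p (by norm_num)))
  · -- 2^(2p^3) = -1, so q ∣ 2^(2p^3)+1
    apply hqB
    rw [← ZMod.natCast_eq_zero_iff]
    push_cast
    rw [h]
    ring
lemma key_p4 {p : ℕ} (hp : p.Prime) (hp2 : p ≠ 2)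
    (hH : ∀ q, q.Prime → q ∣ 2 ^ (2 * p ^ 4) + 1 → Higgs3 q) : False := by
  have hpodd : Odd p := hp.odd_of_ne_two hp2
  have hp3 : 3 ≤ p := by have := hp.two_le; omega
  set A := 2 ^ (2 * p ^ 3) with hA
  set M := 2 ^ (2 * p ^ 4) + 1 with hM
  set B := A + 1 with hB
  have hMA : M = A ^ p + 1 := by
    rw [hM, hA, ← pow_mul]
    ring_nf
  have hA2 : 2 ≤ A := by
    rw [hA]
    calc (2:ℕ) = 2 ^ 1 := by norm_num
    _ ≤ 2 ^ (2 * p ^ 3) := Nat.pow_le_pow_right (by norm_num) (by nlinarith [hp.two_le, Nat.le_self_pow (by norm_num : (3:ℕ) ≠ 0) p])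
  have hpA : p < A := by
    calc p < 2 ^ p := Nat.lt_two_pow_self
    _ ≤ A := Nat.pow_le_pow_right (by norm_num) (by nlinarith [hp.two_le, Nat.le_self_pow (by norm_num : (3:ℕ) ≠ 0) p])
  -- Step 1: every prime factor of M divides B
  have step1 : ∀ q, q.Prime → q ∣ M → q ∣ B := by
    intro q hq hqM
    by_contra hqB
    exact higgs_no_pow4 (hH q hq hqM) hp (p4_dvd_sub_one hp hp2 hq hqM hqB)
  have hBM : B ∣ M := by
    rw [hMA]
    simpa using Odd.nat_add_dvd_pow_add_pow A 1 hpodd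
  obtain ⟨N, hN⟩ := hBM
  have hBpos : 0 < B := by positivity
  have hBltM : B < M := by
    rw [hMA, hB]
    have : A ^ 1 < A ^ p := Nat.pow_lt_pow_right hA2 (by omega)
    simpa using this
  have hN2 : 2 ≤ N := by
    rcases Nat.lt_or_ge N 2 with h | h
    · interval_cases N <;> omega
    · exact h
  -- geometric sum identity
  have hS : (∑ i ∈ Finset.range p, (A:ℤ)^i * (-1)^(p-1-i)) * ((A:ℤ) + 1) = (M:ℤ) := by
    have hgs := geom_sum₂_mul (A:ℤ) (-1) p
    rw [Odd.neg_pow hpodd, sub_neg_eq_add, sub_neg_eq_add] at hgs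
    rw [hgs, hMA]
    push_cast
    ring
  have hNS : (N : ℤ) = ∑ i ∈ Finset.range p, (A:ℤ)^i * (-1)^(p-1-i) := by
    have hcast : ((A:ℤ) + 1) * (N:ℤ) = (M:ℤ) := by
      have h' := hN
      rw [hB] at h'
      exact_mod_cast h'.symm
    have hB0 : ((A:ℤ) + 1) ≠ 0 := by positivity
    apply mul_left_cancel₀ hB0
    rw [hcast, ← hS]
    ring
  have hsum_p : ∀ (R : Type) [inst : CommRing R], ∀ x : R, x = -1 →
      ∑ i ∈ Finset.range p, x^i * (-1:R)^(p-1-i) = (p : R) := by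
    intro R _ x hx
    rw [hx]
    have : ∀ i ∈ Finset.range p, (-1:R)^i * (-1:R)^(p-1-i) = 1 := by
      intro i hi
      rw [← pow_add, show i + (p-1-i) = p - 1 by
        have := Finset.mem_range.mp hi; omega]
      exact Even.neg_one_pow (Nat.Odd.sub_odd hpodd odd_one)
    calc ∑ i ∈ Finset.range p, (-1:R)^i * (-1:R)^(p-1-i)
        = ∑ _i ∈ Finset.range p, (1:R) := Finset.sum_congr rfl this
      _ = (p : R) := by simp
  -- every prime factor of N is p
  have hNM : N ∣ M := ⟨B, by rw [hN]; ring⟩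
  have step4 : ∀ q, q.Prime → q ∣ N → q = p := by
    intro q hq hqN
    haveI : Fact q.Prime := ⟨hq⟩
    have hqM : q ∣ M := hqN.trans hNM
    have hqB : q ∣ B := step1 q hq hqM
    have hAq : (A : ZMod q) = -1 := by
      have h0 : ((B:ℕ) : ZMod q) = 0 := (ZMod.natCast_eq_zero_iff _ _).mpr hqB
      rw [hB] at h0
      push_cast at h0
      linear_combination h0
    have hNq : ((N:ℕ) : ZMod q) = (p : ZMod q) := by
      have hc := congrArg (fun z : ℤ => (z : ZMod q)) hNS
      push_cast at hc
      rw [hc]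
      exact hsum_p (ZMod q) _ hAq
    have h0 : ((N:ℕ) : ZMod q) = 0 := (ZMod.natCast_eq_zero_iff _ _).mpr hqN
    rw [h0] at hNq
    have : q ∣ p := (ZMod.natCast_eq_zero_iff _ _).mp hNq.symm
    exact ((Nat.prime_dvd_prime_iff_eq hq hp).mp this)
  -- p divides N, hence p divides B
  have hpN : p ∣ N := by
    have hmf : N.minFac ∣ N := Nat.minFac_dvd N
    have := step4 N.minFac (Nat.minFac_prime (by omega)) hmf
    rwa [this] at hmf
  have hpB : p ∣ B := step1 p hp ((hpN.trans hNM))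
  -- p^2 does not divide N
  have hp2N : ¬ p ^ 2 ∣ N := by
    intro hdvd
    obtain ⟨s, hs⟩ := hpB
    have hpp : (p : ZMod (p^2)) * (p : ZMod (p^2)) = 0 := by
      have : (((p^2 : ℕ)) : ZMod (p^2)) = 0 := ZMod.natCast_self _
      push_cast at this
      linear_combination this
    have hAR : (A : ZMod (p^2)) = (p : ZMod (p^2)) * (s : ZMod (p^2)) - 1 := by
      have : ((B:ℕ) : ZMod (p^2)) = ((p * s : ℕ) : ZMod (p^2)) := by rw [hs]
      rw [hB] at this
      push_cast at this
      linear_combination this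
    set u : ZMod (p^2) := (p : ZMod (p^2)) * (s : ZMod (p^2)) with hu_def
    have hu : u * u = 0 := by
      rw [hu_def]
      linear_combination ((s : ZMod (p^2)) * (s : ZMod (p^2))) * hpp
    have hpow : ∀ i : ℕ, ((u - 1) ^ i) = (-1) ^ i * (1 - (i : ZMod (p^2)) * u) := by
      intro i
      induction i with
      | zero => simp
      | succ n ih =>
        push_cast
        linear_combination (u - 1) * ih - (-1 : ZMod (p^2)) ^ n * (n : ZMod (p^2)) * hu
    have hNR : ((N:ℕ) : ZMod (p^2)) = (p : ZMod (p^2)) := by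
      have hc := congrArg (fun z : ℤ => (z : ZMod (p^2))) hNS
      push_cast at hc
      rw [hc]
      have heq : ∀ i ∈ Finset.range p,
          (A : ZMod (p^2))^i * (-1 : ZMod (p^2))^(p-1-i) = 1 - (i : ZMod (p^2)) * u := by
        intro i hi
        rw [hAR, hpow i]
        have hone : (-1 : ZMod (p^2))^i * (-1 : ZMod (p^2))^(p-1-i) = 1 := by
          rw [← pow_add, show i + (p-1-i) = p - 1 by
            have := Finset.mem_range.mp hi; omega]
          exact Even.neg_one_pow (Nat.Odd.sub_odd hpodd odd_one)
        linear_combination (1 - (i : ZMod (p^2)) * u) * hone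
      rw [Finset.sum_congr rfl heq, Finset.sum_sub_distrib]
      simp only [Finset.sum_const, Finset.card_range, nsmul_eq_mul, mul_one]
      have hsum_i : (∑ i ∈ Finset.range p, (i : ZMod (p^2)) * u) = 0 := by
        rw [← Finset.sum_mul]
        have : (∑ i ∈ Finset.range p, (i : ZMod (p^2))) = ((∑ i ∈ Finset.range p, i : ℕ) : ZMod (p^2)) := by
          push_cast
          rfl
        rw [this, Finset.sum_range_id]
        have h2 : p * (p - 1) / 2 = p * ((p-1)/2) := by
          rw [Nat.mul_div_assoc]
          exact (Nat.Odd.sub_odd hpodd odd_one).two_dvd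
        rw [h2, hu_def]
        push_cast
        linear_combination (((p-1)/2 : ℕ) : ZMod (p^2)) * (s : ZMod (p^2)) * hpp
      rw [hsum_i, sub_zero]
    have hN0 : ((N:ℕ) : ZMod (p^2)) = 0 := (ZMod.natCast_eq_zero_iff _ _).mpr hdvd
    rw [hN0] at hNR
    have : p ^ 2 ∣ p := (ZMod.natCast_eq_zero_iff _ _).mp hNR.symm
    have := Nat.le_of_dvd hp.pos this
    nlinarith [hp.two_le]
  -- conclude N = p
  obtain ⟨t, ht⟩ := hpN
  have hNt : N = p * t := ht
  have ht1 : t = 1 := by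
    by_contra ht1
    have ht0 : t ≠ 0 := by rintro rfl; omega
    have : t.minFac ∣ t := Nat.minFac_dvd t
    have htp := step4 t.minFac (Nat.minFac_prime ht1) (by
      exact dvd_trans this ⟨p, by rw [hNt]; ring⟩)
    apply hp2N
    rw [hNt, pow_two]
    exact Nat.mul_dvd_mul_left p (by rw [← htp]; exact Nat.minFac_dvd t)
  have hNp : N = p := by rw [hNt, ht1, mul_one]
  -- final contradiction: M = B * p but M > B * p
  have h3p : A ^ 3 ≤ A ^ p := Nat.pow_le_pow_right (by positivity) hp3
  rw [hNp] at hN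
  rw [hMA, hB] at hN
  have e1 : (A+1)*p < (A+1)*A := by nlinarith [hpA]
  have e2 : (A+1)*A ≤ A^3 := by nlinarith [hA2, Nat.mul_le_mul hA2 (le_refl A)]
  omega
lemma odd_of_dvd_odd {t k : ℕ} (hk : Odd k) (ht : t ∣ k) : Odd t := by
  rcases Nat.even_or_odd t with he | ho
  · exfalso
    rw [Nat.odd_iff] at hk
    obtain ⟨c, hc⟩ := he.two_dvd.trans ht
    omega
  · exact ho

lemma heven_fact2 {m : ℕ} (hm : m ∈ Heven) : m.factorization 2 = 1 := by
  obtain ⟨⟨hm1, hH⟩, heven⟩ := hm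
  have hm0 : m ≠ 0 := by omega
  have heven' : (2:ℕ) ∣ m := heven
  have ha1 : 1 ≤ m.factorization 2 :=
    (Nat.Prime.pow_dvd_iff_le_factorization Nat.prime_two hm0).mp (by simpa using heven')
  by_contra hne
  have : m.factorization 2 = 2 ∨ 3 ≤ m.factorization 2 := by omega
  rcases this with h2 | h3
  · -- a = 2 : 17 divides 2^m+1
    have h4 : (4:ℕ) ∣ m := by
      have := (Nat.Prime.pow_dvd_iff_le_factorization Nat.prime_two hm0).mpr (by omega : 2 ≤ m.factorization 2)
      simpa using this
    have hodd : Odd (m / 4) := by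
      rw [Nat.odd_iff]
      by_contra hmod
      have h2d : (2:ℕ) ∣ m / 4 := Nat.dvd_of_mod_eq_zero (by omega)
      have h8 : (8:ℕ) ∣ m := by
        have := (Nat.dvd_div_iff_mul_dvd h4).mp h2d
        simpa using this
      have : (2:ℕ)^3 ∣ m := by norm_num; exact h8
      have := (Nat.Prime.pow_dvd_iff_le_factorization Nat.prime_two hm0).mp this
      omega
    have hdvd17 : (17:ℕ) ∣ 2 ^ m + 1 := by
      have := pow_add_one_dvd (by norm_num : (0:ℕ) < 4) h4 hodd
      norm_num at this
      exact this
    exact higgs_no_pow4 (hH 17 (by norm_num) hdvd17) Nat.prime_two (by norm_num)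
  · -- a ≥ 3
    have hne1 : 2 ^ m + 1 ≠ 1 := by have := Nat.one_le_two_pow (n := m); omega
    set q := (2 ^ m + 1).minFac with hq_def
    have hq : q.Prime := Nat.minFac_prime hne1
    have hqd : q ∣ 2 ^ m + 1 := Nat.minFac_dvd _
    obtain ⟨hq2, h2n, hnn, hq1, hord0⟩ := ord_lemma hq (by omega) hqd
    have hpow : 2 ^ (m.factorization 2 + 1) ∣ orderOf (2 : ZMod q) :=
      two_pow_dvd_of hm0 hord0 h2n hnn
    have h16 : (2:ℕ) ^ 4 ∣ q - 1 :=
      dvd_trans (dvd_trans (pow_dvd_pow 2 (by omega)) hpow) hq1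
    exact higgs_no_pow4 (hH q hq hqd) Nat.prime_two h16

lemma heven_odd_prime {m p : ℕ} (hm : m ∈ Heven) (hp : p.Prime) (hp2 : p ≠ 2) (hpm : p ∣ m) :
    2 * p ∈ HevenPrime ∧ m.factorization p ≤ 3 := by
  have hf2 := heven_fact2 hm
  obtain ⟨⟨hm1, hH⟩, heven⟩ := hm
  have hm0 : m ≠ 0 := by omega
  obtain ⟨k, hk⟩ := (heven : (2:ℕ) ∣ m)
  have hkodd : Odd k := by
    rw [Nat.odd_iff]
    by_contra hmod
    have h2k : (2:ℕ) ∣ k := Nat.dvd_of_mod_eq_zero (by omega)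
    have : (2:ℕ)^2 ∣ m := by
      obtain ⟨t, ht⟩ := h2k
      exact ⟨t, by rw [hk, ht]; ring⟩
    have := (Nat.Prime.pow_dvd_iff_le_factorization Nat.prime_two hm0).mp this
    omega
  have hpk : p ∣ k := by
    have hcop : Nat.Coprime p 2 := (Nat.coprime_primes hp Nat.prime_two).mpr hp2
    exact hcop.dvd_of_dvd_mul_left (by rwa [← hk])
  -- membership of 2p
  obtain ⟨t, ht⟩ := hpk
  have hm2p : m = 2 * p * t := by rw [hk, ht]; ring
  have htodd : Odd t := odd_of_dvd_odd hkodd ⟨p, by rw [ht]; ring⟩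
  have hdvd2p : 2 ^ (2 * p) + 1 ∣ 2 ^ m + 1 := by
    apply pow_add_one_dvd (by have := hp.pos; omega) ⟨t, hm2p⟩
    rw [hm2p, Nat.mul_div_cancel_left t (by have := hp.pos; omega)]
    exact htodd
  have h2pH : 2 * p ∈ Heven := by
    refine ⟨⟨by have := hp.two_le; omega, fun q hq hqd => hH q hq (hqd.trans hdvd2p)⟩, ⟨p, rfl⟩⟩
  refine ⟨⟨h2pH, p, hp, hp.odd_of_ne_two hp2, rfl⟩, ?_⟩
  -- exponent bound
  by_contra hgt
  have h4 : p ^ 4 ∣ m :=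
    (Nat.Prime.pow_dvd_iff_le_factorization hp hm0).mpr (by omega)
  have hp4k : p ^ 4 ∣ k := by
    have hcop : Nat.Coprime (p ^ 4) 2 :=
      Nat.Coprime.pow_left _ ((Nat.coprime_primes hp Nat.prime_two).mpr hp2)
    exact hcop.dvd_of_dvd_mul_left (by rwa [← hk])
  obtain ⟨s, hs⟩ := hp4k
  have hm2p4 : m = 2 * p ^ 4 * s := by rw [hk, hs]; ring
  have hsodd : Odd s := odd_of_dvd_odd hkodd ⟨p ^ 4, by rw [hs]; ring⟩
  have hdvd4 : 2 ^ (2 * p ^ 4) + 1 ∣ 2 ^ m + 1 := by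
    apply pow_add_one_dvd (by have := pow_pos hp.pos 4; linarith) ⟨s, hm2p4⟩
    rw [hm2p4, Nat.mul_div_cancel_left s (by have := pow_pos hp.pos 4; linarith)]
    exact hsodd
  exact key_p4 hp hp2 (fun q hq hqd => hH q hq (hqd.trans hdvd4))
/-- Reduction to the prime case: `H_even` is finite iff `H_even^prime` is finite; more
precisely, if `H_even^prime` has cardinality `N`, then `|H_even| ≤ 4^N`. -/
theorem Heven_finite_iff_prime_case :
    (Heven.Finite ↔ HevenPrime.Finite) ∧
    (HevenPrime.Finite → Heven.ncard ≤ 4 ^ HevenPrime.ncard) := by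
  have main : ∀ hT : HevenPrime.Finite,
      Heven.Finite ∧ Heven.ncard ≤ 4 ^ HevenPrime.ncard := by
    intro hT
    classical
    set F := hT.toFinset with hF
    set f : ℕ → (↥F → Fin 4) :=
      fun m x => ⟨min (m.factorization ((x : ℕ) / 2)) 3, by omega⟩ with hf
    have hfact_le : ∀ m ∈ Heven, ∀ r : ℕ, r.Prime → r ≠ 2 → m.factorization r ≤ 3 := by
      intro m hm r hr hr2
      by_cases hd : r ∣ m
      · exact (heven_odd_prime hm hr hr2 hd).2
      · rw [Nat.factorization_eq_zero_of_not_dvd hd]; omega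
    have hinj : Set.InjOn f Heven := by
      intro m hm m' hm' hfe
      have hm0 : m ≠ 0 := by obtain ⟨⟨h1, _⟩, _⟩ := hm; omega
      have hm0' : m' ≠ 0 := by obtain ⟨⟨h1, _⟩, _⟩ := hm'; omega
      apply Nat.factorization_inj hm0 hm0'
      ext r
      by_cases hr : r.Prime
      · rcases eq_or_ne r 2 with rfl | hr2
        · rw [heven_fact2 hm, heven_fact2 hm']
        · by_cases hd : r ∣ m ∨ r ∣ m'
          · have hmem : 2 * r ∈ HevenPrime := by
              rcases hd with h | h
              · exact (heven_odd_prime hm hr hr2 h).1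
              · exact (heven_odd_prime hm' hr hr2 h).1
            have hxF : 2 * r ∈ F := hT.mem_toFinset.mpr hmem
            have hx := congrFun hfe ⟨2 * r, hxF⟩
            have hv : min (m.factorization (2 * r / 2)) 3
                = min (m'.factorization (2 * r / 2)) 3 := congrArg Fin.val hx
            rw [show 2 * r / 2 = r by omega] at hv
            have b1 := hfact_le m hm r hr hr2
            have b2 := hfact_le m' hm' r hr hr2
            omega
          · push_neg at hd
            rw [Nat.factorization_eq_zero_of_not_dvd hd.1,
              Nat.factorization_eq_zero_of_not_dvd hd.2]
      · rw [Nat.factorization_eq_zero_of_not_prime _ hr,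
          Nat.factorization_eq_zero_of_not_prime _ hr]
    have hfin : Heven.Finite :=
      Set.Finite.of_finite_image (Set.toFinite (f '' Heven)) hinj
    refine ⟨hfin, ?_⟩
    have h1 : Heven.ncard ≤ (Set.univ : Set (↥F → Fin 4)).ncard :=
      Set.ncard_le_ncard_of_injOn f (fun a _ => Set.mem_univ _) hinj Set.finite_univ
    rw [Set.ncard_univ, Nat.card_eq_fintype_card, Fintype.card_fun,
      Fintype.card_fin, Fintype.card_coe] at h1
    rwa [Set.ncard_eq_toFinset_card _ hT]
  constructor
  · constructor
    · intro hfin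
      exact hfin.subset (fun m hm => hm.1)
    · intro hT
      exact (main hT).1
  · intro hT
    exact (main hT).2
end

section
/- If m ∈ H is odd, then m ∈ 𝒮₃^{(≤3)}; that is, every prime factor q of m is a 3-Higgs prime and v_q(m) ≤ 3. -/
/-- `𝒮₃^{(≤3)}`: positive integers all of whose prime factors are 3-Higgs and occur with
exponent at most `3`. -/
def S3 : Set ℕ := {n | 1 ≤ n ∧ ∀ q : ℕ, q.Prime → q ∣ n → Higgs3 q ∧ n.factorization q ≤ 3}

lemma higgs3_two : Higgs3 2 := by
  refine Higgs3.mk 2 Nat.prime_two (fun q hq hdvd => ?_) (fun q hq hdvd => ?_) <;>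
    · norm_num at hdvd
      exact absurd hdvd hq.ne_one

lemma higgs3_three : Higgs3 3 := by
  refine Higgs3.mk 3 Nat.prime_three (fun q hq hdvd => ?_) (fun q hq hdvd => ?_)
  · have : q = 2 := (Nat.prime_dvd_prime_iff_eq hq Nat.prime_two).mp (by simpa using hdvd)
    subst this
    exact higgs3_two
  · have : q = 2 := (Nat.prime_dvd_prime_iff_eq hq Nat.prime_two).mp (by simpa using hdvd)
    subst this
    show (2 : ℕ).factorization 2 ≤ 3
    simp [Nat.Prime.factorization_self Nat.prime_two]

lemma pow_pred (q k : ℕ) (hk : 1 ≤ k) : q ^ k = q ^ (k - 1) * q := by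
  conv_lhs => rw [show k = (k - 1) + 1 by omega]
  rw [pow_succ]

lemma pow_add_one_dvd_s14 {d m : ℕ} (hd : d ∣ m) (hm : Odd m) : 2 ^ d + 1 ∣ 2 ^ m + 1 := by
  obtain ⟨t, rfl⟩ := hd
  have ht : Odd t := by
    rcases Nat.even_or_odd t with h | h
    · exact absurd (h.mul_left d) (Nat.not_even_iff_odd.mpr hm)
    · exact h
  have := Odd.nat_add_dvd_pow_add_pow (2 ^ d) 1 ht
  simpa [pow_mul] using this

/-- If every prime factor of `2^(q^k)+1` divided `2^(q^(k-1))+1`, then by LTE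
`2^(q^k)+1` would divide `(2^(q^(k-1))+1)*q`, contradicting size. -/
lemma key_lemma {q k : ℕ} (hq : q.Prime) (hq2 : q ≠ 2) (hk : 1 ≤ k)
    (hsize : (2 ^ q ^ (k - 1) + 1) * q < 2 ^ q ^ k + 1) :
    ∃ p : ℕ, p.Prime ∧ p ∣ 2 ^ q ^ k + 1 ∧ ¬p ∣ 2 ^ q ^ (k - 1) + 1 := by
  by_contra hcon
  push_neg at hcon
  set a := 2 ^ q ^ (k - 1) with ha
  have hNa : 2 ^ q ^ k + 1 = a ^ q + 1 := by
    rw [ha, ← pow_mul, ← pow_pred q k hk]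
  have hqodd : Odd q := hq.odd_of_ne_two hq2
  have haeven : 2 ∣ a := by
    rw [ha]
    exact dvd_pow_self 2 (pow_ne_zero _ hq.pos.ne')
  have hN0 : 2 ^ q ^ k + 1 ≠ 0 := by positivity
  have hMq0 : (a + 1) * q ≠ 0 := Nat.mul_ne_zero (by omega) hq.pos.ne'
  have hdvd : 2 ^ q ^ k + 1 ∣ (a + 1) * q := by
    rw [← Nat.factorization_le_iff_dvd hN0 hMq0, Finsupp.le_def]
    intro r
    by_cases hrp : r.Prime
    · by_cases hrN : r ∣ 2 ^ q ^ k + 1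
      · have hrM : r ∣ a + 1 := hcon r hrp hrN
        have hr2 : r ≠ 2 := by
          rintro rfl
          rw [hNa] at hrN
          have h2q : (2 : ℕ) ∣ a ^ q := dvd_pow haeven hq.pos.ne'
          omega
        haveI : Fact r.Prime := ⟨hrp⟩
        have hrodd : Odd r := hrp.odd_of_ne_two hr2
        have hra : ¬r ∣ a := by
          intro h
          exact hr2 ((Nat.prime_dvd_prime_iff_eq hrp Nat.prime_two).mp
            (hrp.dvd_of_dvd_pow h))
        have hlte := padicValNat.pow_add_pow (p := r) hrodd (x := a) (y := 1)
          (by simpa using hrM) hra hqodd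
        rw [Nat.factorization_def _ hrp, Nat.factorization_def _ hrp, hNa]
        have hmul : padicValNat r ((a + 1) * q) =
            padicValNat r (a + 1) + padicValNat r q :=
          padicValNat.mul (by positivity) hq.pos.ne'
        simp only [one_pow] at hlte
        omega
      · rw [Nat.factorization_eq_zero_of_not_dvd hrN]
        exact Nat.zero_le _
    · rw [Nat.factorization_eq_zero_of_not_prime _ hrp]
      exact Nat.zero_le _
  have := Nat.le_of_dvd (by positivity) hdvd
  omega

lemma ord_lemma_s14 {q k p : ℕ} (hq : q.Prime) (hq2 : q ≠ 2) (hk : 1 ≤ k) (hp : p.Prime)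
    (hpN : p ∣ 2 ^ q ^ k + 1) (hpM : ¬p ∣ 2 ^ q ^ (k - 1) + 1) : q ^ k ∣ p - 1 := by
  have hp2 : p ≠ 2 := by
    rintro rfl
    have : (2 : ℕ) ∣ 2 ^ q ^ k := dvd_pow_self 2 (pow_ne_zero _ hq.pos.ne')
    omega
  haveI : Fact p.Prime := ⟨hp⟩
  have hp3 : 2 < p := lt_of_le_of_ne hp.two_le (Ne.symm hp2)
  haveI : Fact (2 < p) := ⟨hp3⟩
  have h2ne : (2 : ZMod p) ≠ 0 := by
    intro h
    have h' : ((2 : ℕ) : ZMod p) = 0 := by exact_mod_cast h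
    rw [ZMod.natCast_eq_zero_iff] at h'
    exact hp2 ((Nat.prime_dvd_prime_iff_eq hp Nat.prime_two).mp h')
  have hqk : q ^ k = q ^ (k - 1) * q := pow_pred q k hk
  have hroot : (2 : ZMod p) ^ q ^ k = -1 := by
    have h0 : ((2 ^ q ^ k + 1 : ℕ) : ZMod p) = 0 :=
      (ZMod.natCast_eq_zero_iff _ _).mpr hpN
    push_cast at h0
    linear_combination h0
  set d := orderOf (2 : ZMod p) with hd
  have hord2 : d ∣ 2 * q ^ k := by
    apply orderOf_dvd_of_pow_eq_one
    rw [mul_comm, pow_mul, hroot]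
    ring
  have hnot : ¬d ∣ 2 * q ^ (k - 1) := by
    intro hdvd
    have h1 : (2 : ZMod p) ^ (2 * q ^ (k - 1)) = 1 := by
      rw [← orderOf_dvd_iff_pow_eq_one] at *
      exact hdvd
    have hx2 : (2 : ZMod p) ^ q ^ (k - 1) * (2 : ZMod p) ^ q ^ (k - 1) = 1 := by
      rw [← pow_add, ← two_mul]
      exact h1
    rcases mul_self_eq_one_iff.mp hx2 with hx | hx
    · have hone : (2 : ZMod p) ^ q ^ k = 1 := by
        rw [hqk, pow_mul, hx, one_pow]
      rw [hroot] at hone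
      exact ZMod.neg_one_ne_one hone
    · apply hpM
      rw [← ZMod.natCast_eq_zero_iff]
      push_cast
      rw [hx]
      ring
  have hordp : d ∣ p - 1 := ZMod.orderOf_dvd_card_sub_one h2ne
  refine dvd_trans ?_ hordp
  obtain ⟨u, v, hu, hv, huv⟩ := Nat.dvd_mul.mp hord2
  obtain ⟨j, hj, rfl⟩ := (Nat.dvd_prime_pow hq).mp hv
  by_cases hjk : j = k
  · subst hjk
    exact ⟨u, by rw [← huv, mul_comm]⟩
  · exact absurd (huv ▸ mul_dvd_mul hu (pow_dvd_pow q (by omega))) hnot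

lemma size_one {q : ℕ} (hq5 : 5 ≤ q) : (2 ^ q ^ (1 - 1) + 1) * q < 2 ^ q ^ 1 + 1 := by
  have key : ∀ n : ℕ, 3 * (n + 5) ≤ 2 ^ (n + 5) := by
    intro n
    induction n with
    | zero => norm_num
    | succ t ih =>
      have h : 2 ^ (t + 1 + 5) = 2 ^ (t + 5) * 2 := by ring
      omega
  obtain ⟨n, rfl⟩ := Nat.exists_eq_add_of_le hq5
  have h := key n
  have h2 : (5 : ℕ) + n = n + 5 := by ring
  simp only [Nat.sub_self, pow_zero, pow_one]
  rw [h2]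
  omega

lemma size_big {q k : ℕ} (hq : q.Prime) (hq2 : q ≠ 2) (hk : 2 ≤ k) :
    (2 ^ q ^ (k - 1) + 1) * q < 2 ^ q ^ k + 1 := by
  have hq3 : 3 ≤ q := by
    have := hq.two_le
    have hodd := hq.odd_of_ne_two hq2
    rw [Nat.odd_iff] at hodd
    omega
  set a := 2 ^ q ^ (k - 1) with ha
  have ha2 : 2 ≤ a := by
    rw [ha]
    calc 2 = 2 ^ 1 := (pow_one 2).symm
    _ ≤ 2 ^ q ^ (k - 1) := Nat.pow_le_pow_right (by norm_num) (Nat.one_le_pow _ _ hq.pos)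
  have hqa : q ≤ a := by
    calc q ≤ 2 ^ q := (Nat.lt_two_pow_self (n := q)).le
    _ ≤ 2 ^ q ^ (k - 1) := Nat.pow_le_pow_right (by norm_num)
        (Nat.le_self_pow (by omega) q)
  have hNa : 2 ^ q ^ k = a ^ q := by
    rw [ha, ← pow_mul, ← pow_pred q k (by omega)]
  have h3 : a ^ 3 ≤ a ^ q := Nat.pow_le_pow_right (by omega) hq3
  have hcalc : (a + 1) * q < a ^ 3 := by
    have h1 : (a + 1) * q ≤ 2 * a * a := by nlinarith
    have h2 : 2 * a * a < a * a * a := by nlinarith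
    calc (a + 1) * q ≤ 2 * a * a := h1
    _ < a * a * a := h2
    _ = a ^ 3 := by ring
  rw [hNa]
  omega

/-- If `m ∈ H` is odd, then `m ∈ 𝒮₃^{(≤3)}`: every prime factor `q` of `m` is a
3-Higgs prime and `v_q(m) ≤ 3`. -/
theorem odd_mem_H_mem_S3 (m : ℕ) (hm : m ∈ Hset) (hodd : Odd m) : m ∈ S3 := by
  obtain ⟨hm1, hmH⟩ := hm
  refine ⟨hm1, fun q hq hqm => ?_⟩
  have hm0 : m ≠ 0 := by omega
  have hq2 : q ≠ 2 := by
    rintro rfl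
    rw [Nat.odd_iff] at hodd
    omega
  constructor
  · -- Higgs3 q
    by_cases hq3 : q = 3
    · subst hq3
      exact higgs3_three
    · have hq5 : 5 ≤ q := by
        have := hq.two_le
        have hodd' := hq.odd_of_ne_two hq2
        rw [Nat.odd_iff] at hodd'
        omega
      obtain ⟨p, hp, hpN, hpM⟩ := key_lemma hq hq2 le_rfl (size_one hq5)
      have hNm : 2 ^ q ^ 1 + 1 ∣ 2 ^ m + 1 := by
        rw [pow_one]
        exact pow_add_one_dvd_s14 hqm hodd
      have hP : Higgs3 p := hmH p hp (hpN.trans hNm)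
      have hqp : q ∣ p - 1 := by
        have := ord_lemma_s14 hq hq2 le_rfl hp hpN hpM
        rwa [pow_one] at this
      cases hP with
      | mk p hp' hrec hexp => exact hrec q hq hqp
  · -- exponent bound
    by_contra hk4
    push_neg at hk4
    set k := m.factorization q with hkdef
    have hk1 : 4 ≤ k := hk4
    have hqkm : q ^ k ∣ m := Nat.ordProj_dvd m q
    obtain ⟨p, hp, hpN, hpM⟩ := key_lemma (k := k) hq hq2 (by omega) (size_big (k := k) hq hq2 (by omega))
    have hNm : 2 ^ q ^ k + 1 ∣ 2 ^ m + 1 := pow_add_one_dvd_s14 hqkm hodd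
    have hP : Higgs3 p := hmH p hp (hpN.trans hNm)
    have hqkp : q ^ k ∣ p - 1 := ord_lemma_s14 hq hq2 (by omega) hp hpN hpM
    have hp1 : p - 1 ≠ 0 := by
      have := hp.two_le
      omega
    have hle : k ≤ (p - 1).factorization q :=
      (Nat.Prime.pow_dvd_iff_le_factorization hq hp1).mp hqkp
    have hqp1 : q ∣ p - 1 := dvd_trans (dvd_pow_self q (by omega)) hqkp
    cases hP with
    | mk p hp' hrec hexp =>
      have := hexp q hq hqp1
      omega
end

section
/- Let P = {p_1 < p_2 < ⋯} be an infinite set of primes, let 𝒮(P) = { ∏_j p_j^{e_j} : 0 ≤ e_j ≤ 3 } be the bounded-exponent semigroup on P, and let A_P(x) = #(𝒮(P) ∩ [1, x]). If A_P(x) = o(log x) as x → ∞, then #{ p ∈ P : p ≤ x } = O(log log x). -/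
open Filter Asymptotics

/-- `𝒮(P)`: positive integers all of whose prime factors lie in `P` and occur with
exponent at most `3`. -/
def SP (P : Set ℕ) : Set ℕ :=
  {n | 1 ≤ n ∧ ∀ q : ℕ, q.Prime → q ∣ n → q ∈ P ∧ n.factorization q ≤ 3}

lemma sq_le_two_pow : ∀ k : ℕ, 4 ≤ k → k ^ 2 ≤ 2 ^ k := by
  intro k
  induction k with
  | zero => omega
  | succ n ih =>
    intro h
    rcases Nat.lt_or_ge n 4 with hn | hn
    · have : n = 3 := by omega
      subst this; norm_num
    · have H := ih hn
      have h2 : 2 * n + 1 ≤ n ^ 2 := by nlinarith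
      calc (n + 1) ^ 2 = n ^ 2 + (2 * n + 1) := by ring
        _ ≤ 2 ^ n + 2 ^ n := by omega
        _ = 2 ^ (n + 1) := by ring

-- products of subsets of a finset of primes in P lie in SP P
lemma prod_mem_SP {P : Set ℕ} (S : Finset ℕ) (hS : ∀ p ∈ S, p ∈ P ∧ p.Prime) :
    (∏ p ∈ S, p) ∈ SP P := by
  have hprime : ∀ p ∈ S, p.Prime := fun p hp => (hS p hp).2
  have hne : (∏ p ∈ S, p) ≠ 0 := Finset.prod_ne_zero_iff.2 fun p hp => (hprime p hp).ne_zero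
  refine ⟨Nat.one_le_iff_ne_zero.2 hne, fun q hq hdvd => ?_⟩
  have hqS : q ∈ S := by
    have := Nat.primeFactors_prod hprime
    rw [← this]
    exact Nat.mem_primeFactors.2 ⟨hq, hdvd, hne⟩
  refine ⟨(hS q hqS).1, ?_⟩
  rw [Nat.factorization_prod (fun p hp => (hprime p hp).ne_zero)]
  rw [Finsupp.finset_sum_apply]
  have : ∀ p ∈ S, (Nat.factorization p) q ≤ if p = q then 1 else 0 := by
    intro p hp
    rw [(hprime p hp).factorization, Finsupp.single_apply]
  calc ∑ p ∈ S, (Nat.factorization p) q ≤ ∑ p ∈ S, if p = q then 1 else 0 :=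
        Finset.sum_le_sum this
    _ = if q ∈ S then 1 else 0 := Finset.sum_ite_eq' S q (fun _ => 1)
    _ ≤ 3 := by split <;> omega

lemma two_pow_le_count {P : Set ℕ} (F : Finset ℕ) (hF : ∀ p ∈ F, p ∈ P ∧ p.Prime)
    {x : ℝ} (hx : 1 ≤ x) (hFx : ∀ p ∈ F, (p : ℝ) ≤ x) :
    2 ^ F.card ≤ (SP P ∩ {n : ℕ | (n : ℝ) ≤ x ^ F.card}).ncard := by
  set y : ℝ := x ^ F.card with hy
  have hT : (SP P ∩ {n : ℕ | (n : ℝ) ≤ y}).Finite := by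
    apply (Set.finite_Iic ⌊y⌋₊).subset
    intro n hn
    exact Nat.le_floor hn.2
  have hsub : F.powerset.image (fun S => ∏ p ∈ S, p) ⊆ hT.toFinset := by
    intro n hn
    simp only [Finset.mem_image, Finset.mem_powerset] at hn
    obtain ⟨S, hSF, rfl⟩ := hn
    rw [Set.Finite.mem_toFinset]
    refine ⟨prod_mem_SP S (fun p hp => hF p (hSF hp)), ?_⟩
    show ((∏ p ∈ S, p : ℕ) : ℝ) ≤ y
    push_cast
    calc (∏ p ∈ S, (p : ℝ)) ≤ ∏ _p ∈ S, x :=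
          Finset.prod_le_prod (fun p _ => by positivity) (fun p hp => hFx p (hSF hp))
      _ = x ^ S.card := by rw [Finset.prod_const]
      _ ≤ x ^ F.card := pow_le_pow_right₀ hx (Finset.card_le_card hSF)
  have hinj : Set.InjOn (fun S : Finset ℕ => ∏ p ∈ S, p) (F.powerset : Set (Finset ℕ)) := by
    intro S hS T hT' hST
    simp only [Finset.coe_powerset, Set.mem_preimage, Set.mem_powerset_iff, Finset.coe_subset] at hS hT'
    rw [← Finset.mem_powerset] at hS hT'
    have h1 := Nat.primeFactors_prod (s := S) (fun p hp => (hF p (Finset.mem_powerset.1 hS hp)).2)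
    have h2 := Nat.primeFactors_prod (s := T) (fun p hp => (hF p (Finset.mem_powerset.1 hT' hp)).2)
    rw [← h1, ← h2]
    simp only at hST
    rw [hST]
  have hcard := Finset.card_le_card hsub
  rw [Finset.card_image_of_injOn hinj, Finset.card_powerset] at hcard
  rwa [Set.ncard_eq_toFinset_card _ hT]

/-- Loglog obstruction: if `P` is an infinite set of primes whose bounded-exponent
semigroup counting function satisfies `A_P(x) = o(log x)`, then
`#{p ∈ P : p ≤ x} = O(log log x)`. -/
theorem SP_sublog_forces_loglog (P : Set ℕ) (hP : ∀ p ∈ P, Nat.Prime p)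
    (hInf : P.Infinite)
    (h : (fun x : ℝ => ((SP P ∩ {n : ℕ | (n : ℝ) ≤ x}).ncard : ℝ))
      =o[atTop] Real.log) :
    (fun x : ℝ => ((P ∩ {p : ℕ | (p : ℝ) ≤ x}).ncard : ℝ))
      =O[atTop] fun x : ℝ => Real.log (Real.log x) := by
  have hbound := h.def (by norm_num : (0 : ℝ) < 1 / 2)
  rw [eventually_atTop] at hbound
  obtain ⟨Y, hY⟩ := hbound
  obtain ⟨Q, hQP, hQ4⟩ := hInf.exists_subset_card_eq 4
  set M : ℝ := ((Q.sup id : ℕ) : ℝ) with hM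
  rw [isBigO_iff]
  refine ⟨2 / Real.log 2, ?_⟩
  filter_upwards [eventually_ge_atTop Y, eventually_ge_atTop (max 1 M),
    (Real.tendsto_log_atTop.eventually_ge_atTop 1)] with x hxY hxM hlog
  have hx1 : (1 : ℝ) ≤ x := le_trans (le_max_left _ _) hxM
  have hxM' : M ≤ x := le_trans (le_max_right _ _) hxM
  -- the finite prime-counting set
  have hfin : (P ∩ {p : ℕ | (p : ℝ) ≤ x}).Finite := by
    apply (Set.finite_Iic ⌊x⌋₊).subset
    intro n hn
    exact Nat.le_floor hn.2
  set F : Finset ℕ := hfin.toFinset with hF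
  have hmemF : ∀ p, p ∈ F ↔ p ∈ P ∧ (p : ℝ) ≤ x := by
    intro p; rw [Set.Finite.mem_toFinset]; rfl
  have hFP : ∀ p ∈ F, p ∈ P ∧ p.Prime := fun p hp =>
    ⟨((hmemF p).1 hp).1, hP p ((hmemF p).1 hp).1⟩
  have hFx : ∀ p ∈ F, (p : ℝ) ≤ x := fun p hp => ((hmemF p).1 hp).2
  set k : ℕ := F.card with hk
  have hncard : (P ∩ {p : ℕ | (p : ℝ) ≤ x}).ncard = k := by
    rw [Set.ncard_eq_toFinset_card _ hfin]
  -- k ≥ 4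
  have hQF : Q ⊆ F := by
    intro q hq
    rw [hmemF]
    refine ⟨hQP hq, ?_⟩
    calc (q : ℝ) ≤ M := by exact_mod_cast Nat.cast_le.2 (Finset.le_sup (f := id) hq)
      _ ≤ x := hxM'
  have hk4 : 4 ≤ k := hQ4 ▸ Finset.card_le_card hQF
  have hk0 : k ≠ 0 := by omega
  -- apply the count bound
  have hcount := two_pow_le_count F hFP hx1 hFx
  -- x^k ≥ Y
  have hxk : Y ≤ x ^ k := le_trans hxY (le_self_pow₀ hx1 hk0)
  have hA := hY (x ^ k) hxk
  simp only [Real.norm_eq_abs] at hA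
  rw [abs_of_nonneg (by positivity : (0:ℝ) ≤ ((SP P ∩ {n : ℕ | (n : ℝ) ≤ x ^ k}).ncard : ℝ)),
    abs_of_nonneg (Real.log_nonneg (one_le_pow₀ hx1))] at hA
  -- hA : A(x^k) ≤ 1/2 * log (x^k)
  have hlogpow : Real.log (x ^ k) = k * Real.log x := Real.log_pow x k
  set L : ℝ := Real.log x with hL
  have h1 : (2 : ℝ) ^ k ≤ 1 / 2 * (k * L) := by
    calc (2 : ℝ) ^ k ≤ ((SP P ∩ {n : ℕ | (n : ℝ) ≤ x ^ k}).ncard : ℝ) := by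
          exact_mod_cast hcount
      _ ≤ 1 / 2 * Real.log (x ^ k) := hA
      _ = 1 / 2 * (k * L) := by rw [hlogpow]
  have h2 : ((k : ℝ)) ^ 2 ≤ 2 ^ k := by exact_mod_cast sq_le_two_pow k hk4
  have hpos : (0 : ℝ) < 2 ^ k := by positivity
  have h3 : (2 : ℝ) ^ k ≤ L ^ 2 := by nlinarith [sq_nonneg ((k : ℝ) * L - 2 * 2 ^ k), hlog]
  -- take logs
  have hlog2 : (0 : ℝ) < Real.log 2 := Real.log_pos (by norm_num)
  have h4 : (k : ℝ) * Real.log 2 ≤ 2 * Real.log L := by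
    have := Real.log_le_log hpos h3
    rwa [Real.log_pow, Real.log_pow, Nat.cast_two] at this
  have hlogL : 0 ≤ Real.log L := Real.log_nonneg hlog
  rw [hncard]
  rw [Real.norm_eq_abs, Real.norm_eq_abs, abs_of_nonneg (by positivity : (0:ℝ) ≤ (k:ℝ)),
    abs_of_nonneg hlogL]
  rw [div_mul_eq_mul_div, le_div_iff₀ hlog2]
  linarith
end

section
/- Define A(x) = #(𝒮₃^{(≤3)} ∩ [1, x]) and, for each odd prime p, Z(p) = #{ r prime : r ∣ Φ_{4p}(2) and (r−1)/(4p) ∈ 𝒮₃^{(≤3)} }, where Φ_{4p} is the 4p-th cyclotomic polynomial. Suppose: (i) there exists C > 0 such that for every sufficiently large prime p ∈ 𝒫₃, Z(p) ≤ C · A(2^{2p}/(4p)) / p; and (ii) A(x) = o(log x) as x → ∞. Then H_even is finite. -/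
open Filter Asymptotics

/-- The counting function `A(x) = #(𝒮₃^{(≤3)} ∩ [1, x])`. -/
noncomputable def Afun (x : ℝ) : ℝ := ((S3 ∩ {n : ℕ | (n : ℝ) ≤ x}).ncard : ℝ)

/-- `Z(p) = #{ r prime : r ∣ Φ_{4p}(2) and (r-1)/(4p) ∈ 𝒮₃^{(≤3)} }`. -/
noncomputable def Zfun (p : ℕ) : ℕ :=
  {r : ℕ | r.Prime ∧ (r : ℤ) ∣ (Polynomial.cyclotomic (4 * p) ℤ).eval 2 ∧
    (r - 1) / (4 * p) ∈ S3}.ncard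

lemma higgs_fac {r q : ℕ} (h : Higgs3 r) (hq : q.Prime) (hd : q ∣ r - 1) :
    Higgs3 q ∧ (r - 1).factorization q ≤ 3 := by
  cases h with
  | mk p hp hrec hexp => exact ⟨hrec q hq hd, hexp q hq hd⟩

-- two-adic valuation lemma
lemma two_adic_ord {t m : ℕ} (ht : t ≠ 0) (hm : m ≠ 0) (h2 : t ∣ 2 * m) (h1 : ¬ t ∣ m) :
    m.factorization 2 + 1 ≤ t.factorization 2 := by
  by_contra hlt
  push_neg at hlt
  apply h1
  rw [← Nat.factorization_le_iff_dvd ht hm]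
  intro p
  have hle := (Nat.factorization_le_iff_dvd ht (by positivity)).2 h2
  have hp := hle p
  rw [Nat.factorization_mul (by norm_num) hm] at hp
  simp only [Finsupp.coe_add, Pi.add_apply] at hp
  rcases eq_or_ne p 2 with rfl | hne
  · omega
  · have : (Nat.factorization 2) p = 0 := by
      rw [Nat.Prime.factorization (by norm_num)]
      simp [Finsupp.single_apply, (Ne.symm hne)]
    omega

open Polynomial

lemma cyclo_expand_pow {q : ℕ} (hq : q.Prime) (e : ℕ) (he : 1 ≤ e) :
    cyclotomic (4 * q ^ e) ℤ = expand ℤ (q ^ (e - 1)) (cyclotomic (4 * q) ℤ) := by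
  induction e with
  | zero => omega
  | succ n ih =>
    rcases Nat.eq_or_lt_of_le he with h1 | h2
    · simp [← h1]
    · have hn1 : 1 ≤ n := by omega
      have h : 4 * q ^ (n + 1) = (4 * q ^ n) * q := by ring
      have hd : q ∣ 4 * q ^ n := Dvd.dvd.mul_left (dvd_pow_self q (by omega)) 4
      rw [h, ← cyclotomic_expand_eq_cyclotomic hq hd ℤ, ih hn1, Polynomial.expand_expand]
      rw [show n + 1 - 1 = (n - 1) + 1 from by omega, pow_succ, mul_comm]

lemma cyclo_eval_identity {q : ℕ} (hq : q.Prime) (hq2 : q ≠ 2) (e : ℕ) (he : 1 ≤ e) :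
    (cyclotomic (4 * q ^ e) ℤ).eval 2 * ((2:ℤ) ^ (2 * q ^ (e - 1)) + 1) =
      (2:ℤ) ^ (2 * q ^ e) + 1 := by
  have hnd : ¬ q ∣ 4 := by
    intro h
    have h4 : q ≤ 4 := Nat.le_of_dvd (by norm_num) h
    have h2 : 2 ≤ q := hq.two_le
    interval_cases q <;> first | omega | norm_num at hq
  have h4 : cyclotomic 4 ℤ = 1 + X ^ 2 := by
    have := cyclotomic_prime_pow_eq_geom_sum (R := ℤ) (p := 2) (n := 1) Nat.prime_two
    norm_num [Finset.sum_range_succ] at this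
    exact this
  have hmul := cyclotomic_expand_eq_cyclotomic_mul hq hnd ℤ
  have hkey := congrArg (fun f => (expand ℤ (q ^ (e - 1)) f).eval 2) hmul
  simp only [map_mul, Polynomial.expand_eval, eval_mul, h4, eval_add, eval_one, eval_pow,
    eval_X] at hkey
  rw [cyclo_expand_pow hq e he, Polynomial.expand_eval]
  set y : ℤ := (2:ℤ) ^ (q ^ (e - 1)) with hy
  have h1 : (2:ℤ) ^ (2 * q ^ (e - 1)) = y ^ 2 := by rw [hy, ← pow_mul, mul_comm]
  have h2 : (2:ℤ) ^ (2 * q ^ e) = (y ^ q) ^ 2 := by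
    rw [hy, ← pow_mul, ← pow_mul, ← mul_assoc, mul_comm (q ^ (e-1)) q, ← pow_succ',
      show (e - 1) + 1 = e from by omega, mul_comm]
  rw [h1, h2]
  linarith [hkey.symm]

lemma phi_dvd (n : ℕ) : (cyclotomic n ℤ).eval 2 ∣ 2 ^ n - 1 := by
  simpa using eval_dvd (cyclotomic.dvd_X_pow_sub_one n ℤ) (x := (2:ℤ))

lemma phi_pos {n : ℕ} (hn : 2 < n) : 0 < (cyclotomic n ℤ).eval 2 := cyclotomic_pos hn 2

lemma phi_gt_one {n : ℕ} (hn : 2 < n) : 1 < (cyclotomic n ℤ).eval 2 := by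
  have h := sub_one_lt_natAbs_cyclotomic_eval (n := n) (q := 2) (by omega) (by norm_num)
  norm_num at h
  have hp := phi_pos hn
  have h2 : (((cyclotomic n ℤ).eval 2).natAbs : ℤ) = (cyclotomic n ℤ).eval 2 :=
    Int.natAbs_of_nonneg hp.le
  omega

lemma phi_odd {n : ℕ} (hn : 1 ≤ n) : ¬ (2:ℤ) ∣ (cyclotomic n ℤ).eval 2 := by
  intro h
  have h2 : (2:ℤ) ∣ 2 ^ n - 1 := h.trans (phi_dvd n)
  have : (2:ℤ) ∣ 2 ^ n := dvd_pow_self 2 (by omega)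
  omega

lemma pow_pow_card {q : ℕ} [Fact q.Prime] (e : ℕ) (a : ZMod q) : a ^ q ^ e = a := by
  induction e with
  | zero => simp
  | succ n ih => rw [pow_succ, pow_mul, ih, ZMod.pow_card]

lemma q_dvd_phi_eq_five {q : ℕ} (hq : q.Prime) (hq2 : q ≠ 2) {e : ℕ} (he : 1 ≤ e)
    (hd : (q:ℤ) ∣ (cyclotomic (4 * q ^ e) ℤ).eval 2) : q = 5 := by
  have hq5 : (q:ℤ) ∣ (2:ℤ) ^ (2 * q ^ e) + 1 := by
    rw [← cyclo_eval_identity hq hq2 e he]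
    exact hd.mul_right _
  haveI : Fact q.Prime := ⟨hq⟩
  have hcast : ((2:ℤ) ^ (2 * q ^ e) + 1 : ℤ) = (((2 ^ (2 * q ^ e) + 1 : ℕ) : ℤ)) := by push_cast; ring
  rw [hcast, Int.natCast_dvd_natCast] at hq5
  have hz : ((2 ^ (2 * q ^ e) + 1 : ℕ) : ZMod q) = 0 := (ZMod.natCast_eq_zero_iff _ _).mpr hq5
  push_cast at hz
  rw [mul_comm, pow_mul, pow_pow_card] at hz
  have h5 : ((5:ℕ) : ZMod q) = 0 := by
    push_cast
    linear_combination hz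
  have : q ∣ 5 := (ZMod.natCast_eq_zero_iff _ _).mp h5
  exact (Nat.prime_dvd_prime_iff_eq hq (by norm_num)).mp this

lemma exists_good_prime {q : ℕ} (hq : q.Prime) (hq2 : q ≠ 2) {e : ℕ} (he : 1 ≤ e) :
    ∃ r : ℕ, r.Prime ∧ (r:ℤ) ∣ (cyclotomic (4 * q ^ e) ℤ).eval 2 ∧ r ≠ q ∧ r ≠ 2 := by
  have hn : 2 < 4 * q ^ e := by
    have : 1 ≤ q ^ e := Nat.one_le_pow _ _ hq.pos
    omega
  have hΦ1 : 1 < (cyclotomic (4 * q ^ e) ℤ).eval 2 := phi_gt_one hn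
  set Φ : ℤ := (cyclotomic (4 * q ^ e) ℤ).eval 2 with hΦdef
  set N : ℕ := Φ.toNat with hNdef
  have hNΦ : (N : ℤ) = Φ := Int.toNat_of_nonneg (by omega)
  have hN1 : 1 < N := by omega
  by_contra hcon
  push_neg at hcon
  have hall : ∀ {d : ℕ}, d.Prime → d ∣ N → d = q := by
    intro d hd hdN
    have hdΦ : (d:ℤ) ∣ Φ := by
      rw [← hNΦ]
      exact_mod_cast hdN
    have hd2 : d ≠ 2 := by
      rintro rfl
      exact phi_odd (by omega) hdΦ
    by_contra hdq
    exact hd2 (hcon d hd hdΦ hdq)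
  have hNpow := Nat.eq_prime_pow_of_unique_prime_dvd (by omega) hall
  set j : ℕ := N.primeFactorsList.length with hjdef
  have hj1 : 1 ≤ j := by
    by_contra hj
    rw [show j = 0 from by omega] at hNpow
    simp at hNpow
    omega
  have hqN : q ∣ N := hNpow ▸ dvd_pow_self q (by omega)
  have hq5 : q = 5 := by
    apply q_dvd_phi_eq_five hq hq2 he
    show (q:ℤ) ∣ Φ
    rw [← hNΦ]
    exact_mod_cast hqN
  subst hq5
  -- now q = 5
  set a : ℤ := (2:ℤ) ^ (2 * 5 ^ (e - 1)) with hadef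
  have ha4 : (4:ℤ) ≤ a := by
    calc (4:ℤ) = 2 ^ 2 := by norm_num
    _ ≤ a := by
      apply pow_le_pow_right₀ (by norm_num)
      have := Nat.one_le_pow (e - 1) 5 (by norm_num)
      omega
  have hid : Φ * (a + 1) = a ^ 5 + 1 := by
    have := cyclo_eval_identity hq (by norm_num) e he
    rw [← hΦdef] at this
    rw [this, hadef, ← pow_mul]
    congr 2
    rw [mul_assoc]
    congr 1
    rw [← pow_succ]
    congr 1
    omega
  have hx : ((2:ZMod 5) ^ 2) = -1 := by decide
  have h5a : (5:ℤ) ∣ a + 1 := by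
    have : ((a + 1 : ℤ) : ZMod 5) = 0 := by
      haveI : Fact (Nat.Prime 5) := ⟨by norm_num⟩
      push_cast [hadef]
      rw [pow_mul]
      show ((2:ZMod 5) ^ 2) ^ 5 ^ (e-1) + 1 = 0
      have hodd : Odd (5 ^ (e-1)) := Odd.pow (by decide)
      rw [hx, Odd.neg_one_pow hodd]
      ring
    exact_mod_cast (ZMod.intCast_zmod_eq_zero_iff_dvd _ _).mp this
  obtain ⟨t, ht⟩ := h5a
  have hΦform : Φ = a ^ 4 - a ^ 3 + a ^ 2 - a + 1 := by
    have hcancel : (a + 1) ≠ 0 := by omega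
    apply mul_right_cancel₀ hcancel
    rw [hid]; ring
  have hΦ25 : ((Φ : ℤ) : ZMod 25) = 5 := by
    have key : ∀ s : ZMod 25, (5*s-1)^4 - (5*s-1)^3 + (5*s-1)^2 - (5*s-1) + 1 = 5 := by decide
    have ha' : a = 5 * t - 1 := by omega
    rw [hΦform, ha']
    push_cast
    exact key ((t : ℤ) : ZMod 25)
  have hj2 : j < 2 := by
    by_contra hj2
    push_neg at hj2
    have : ((N : ℕ) : ZMod 25) = 0 := by
      rw [hNpow, show j = 2 + (j - 2) from by omega, pow_add]
      push_cast
      rw [show ((25:ZMod 25)) = 0 from by decide, zero_mul]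
    rw [show ((N : ℕ) : ZMod 25) = ((N : ℤ) : ZMod 25) from by push_cast; ring, hNΦ, hΦ25] at this
    exact absurd this (by decide)
  have hΦ5 : Φ ≤ 5 := by
    have : N = 5 ^ j := hNpow
    have : N ≤ 5 := by
      rw [hNpow, show j = 1 from by omega]
      omega
    omega
  have hfac : (0:ℤ) ≤ (a - 4) * (a^3 + 3*a^2 + 13*a + 51) := by
    apply mul_nonneg (by linarith)
    have h0 : (0:ℤ) ≤ a := by linarith
    have := pow_nonneg h0 3
    nlinarith
  nlinarith [hΦform, hΦ5, hfac]

lemma two_ne_zero_zmod {r : ℕ} (hr : r.Prime) (hr2 : r ≠ 2) : (2 : ZMod r) ≠ 0 := by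
  intro h0
  have hnd : ¬ r ∣ 2 := fun hh => hr2 ((Nat.prime_dvd_prime_iff_eq hr Nat.prime_two).mp hh)
  exact hnd ((ZMod.natCast_eq_zero_iff 2 r).mp (by exact_mod_cast h0))

lemma order_from_cyclotomic {n r : ℕ} (hn : 0 < n) (hr : r.Prime)
    (hd : (r:ℤ) ∣ (cyclotomic n ℤ).eval 2) (hrn : ¬ r ∣ n) (hr2 : r ≠ 2) :
    orderOf (2 : ZMod r) = n ∧ n ∣ r - 1 := by
  haveI : Fact r.Prime := ⟨hr⟩
  have hroot : IsRoot (cyclotomic n (ZMod r)) (((2:ℤ) : ZMod r)) := by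
    rw [IsRoot.def, ← map_cyclotomic_int n (ZMod r), eval_map,
      show (((2:ℤ) : ZMod r)) = (Int.castRingHom (ZMod r)) 2 from rfl, eval₂_hom,
      Int.coe_castRingHom, ZMod.intCast_zmod_eq_zero_iff_dvd]
    exact hd
  haveI : NeZero (n : ZMod r) := NeZero.of_not_dvd (ZMod r) hrn
  have hprim := isRoot_cyclotomic_iff.mp hroot
  have hord : orderOf (((2:ℤ)) : ZMod r) = n := hprim.eq_orderOf.symm
  have hcast : (((2:ℤ)) : ZMod r) = (2 : ZMod r) := by push_cast; ring
  rw [hcast] at hord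
  refine ⟨hord, ?_⟩
  rw [← hord]
  exact ZMod.orderOf_dvd_card_sub_one (two_ne_zero_zmod hr hr2)

lemma pow_half_eq_neg_one {r k : ℕ} (hr : r.Prime) (hk : 1 ≤ k)
    (hord : orderOf (2 : ZMod r) = 4 * k) : (2 : ZMod r) ^ (2 * k) = -1 := by
  haveI : Fact r.Prime := ⟨hr⟩
  have hsq : ((2 : ZMod r) ^ (2 * k)) * ((2 : ZMod r) ^ (2 * k)) = 1 := by
    rw [← pow_add, show 2 * k + 2 * k = 4 * k from by ring, ← hord, pow_orderOf_eq_one]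
  rcases mul_self_eq_one_iff.mp hsq with h1 | h1
  · exfalso
    have := orderOf_dvd_of_pow_eq_one h1
    rw [hord] at this
    have := Nat.le_of_dvd (by omega) this
    omega
  · exact h1

lemma dvd_two_pow_add_one {r m k : ℕ} (hr : r.Prime)
    (hneg : (2 : ZMod r) ^ (2 * k) = -1) (hkm : 2 * k ∣ m) (hodd : Odd (m / (2 * k))) :
    r ∣ 2 ^ m + 1 := by
  haveI : Fact r.Prime := ⟨hr⟩
  have hm : m = (2 * k) * (m / (2 * k)) := (Nat.mul_div_cancel' hkm).symm
  have hpow : (2 : ZMod r) ^ m = -1 := by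
    rw [hm, pow_mul, hneg, Odd.neg_one_pow hodd]
  have : ((2 ^ m + 1 : ℕ) : ZMod r) = 0 := by
    push_cast
    rw [hpow]
    ring
  exact (ZMod.natCast_eq_zero_iff _ r).mp this

lemma no_four_dvd {m : ℕ} (hm : m ∈ Hset) : ¬ (4 ∣ m) := by
  intro h4
  obtain ⟨hm1, hmH⟩ := hm
  have hK2 : 2 ≤ 2 ^ m := by
    calc 2 = 2 ^ 1 := rfl
    _ ≤ 2 ^ m := Nat.pow_le_pow_right (by norm_num) hm1
  have hK1 : 2 ^ m + 1 ≠ 1 := by omega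
  set r := (2 ^ m + 1).minFac with hrdef
  have hr : r.Prime := Nat.minFac_prime hK1
  have hrd : r ∣ 2 ^ m + 1 := Nat.minFac_dvd _
  have hoddK : (2 ^ m + 1) % 2 = 1 := by
    have : 2 ∣ 2 ^ m := dvd_pow_self 2 (by omega)
    omega
  have hr2 : r ≠ 2 := by
    intro h
    rw [h] at hrd
    omega
  haveI : Fact r.Prime := ⟨hr⟩
  haveI : Fact (2 < r) := ⟨hr.two_le.lt_of_ne (Ne.symm hr2)⟩
  have hcast : (2 : ZMod r) ^ m = -1 := by
    have h0 : ((2 ^ m + 1 : ℕ) : ZMod r) = 0 := (ZMod.natCast_eq_zero_iff _ r).mpr hrd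
    push_cast at h0
    linear_combination h0
  set t := orderOf (2 : ZMod r) with htdef
  have h2ne : (2 : ZMod r) ≠ 0 := two_ne_zero_zmod hr hr2
  have htr : t ∣ r - 1 := ZMod.orderOf_dvd_card_sub_one h2ne
  have ht2m : t ∣ 2 * m := by
    apply orderOf_dvd_of_pow_eq_one
    rw [mul_comm, pow_mul, hcast]
    ring
  have htnm : ¬ t ∣ m := by
    intro h
    have h1 : (2 : ZMod r) ^ m = 1 := orderOf_dvd_iff_pow_eq_one.mp h
    rw [hcast] at h1
    exact ZMod.neg_one_ne_one h1
  have hrpos : 3 ≤ r := by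
    have := hr.two_le
    omega
  have ht0 : t ≠ 0 := by
    intro h0
    rw [h0] at htr
    have := Nat.eq_zero_of_zero_dvd htr
    omega
  have hm0 : m ≠ 0 := by omega
  have hv2m : 2 ≤ m.factorization 2 := by
    apply (Nat.Prime.pow_dvd_iff_le_factorization Nat.prime_two hm0).mp
    simpa using h4
  have hv2t : 3 ≤ t.factorization 2 := by
    have := two_adic_ord ht0 hm0 ht2m htnm
    omega
  have h8t : (8:ℕ) ∣ t := by
    have : (2:ℕ) ^ 3 ∣ t := (Nat.Prime.pow_dvd_iff_le_factorization Nat.prime_two ht0).mpr hv2t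
    simpa using this
  have h8r : (8:ℕ) ∣ r - 1 := h8t.trans htr
  have hr8 : r % 8 = 1 := by
    obtain ⟨c, hc⟩ := h8r
    omega
  have hsq : IsSquare (2 : ZMod r) := (ZMod.exists_sq_eq_two_iff hr2).mpr (Or.inl hr8)
  obtain ⟨c, hc⟩ := hsq
  have hc0 : c ≠ 0 := by
    intro h0
    rw [h0, mul_zero] at hc
    exact h2ne hc
  set s := (r - 1) / 2 with hsdef
  have hs2 : 2 * s = r - 1 := Nat.mul_div_cancel' (dvd_trans (by norm_num) h8r)
  have hpow : (2 : ZMod r) ^ s = 1 := by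
    have hcr : c ^ (r - 1) = 1 := ZMod.pow_card_sub_one_eq_one hc0
    calc (2 : ZMod r) ^ s = (c * c) ^ s := by rw [← hc]
    _ = c ^ (2 * s) := by rw [← pow_two, ← pow_mul]
    _ = c ^ (r - 1) := by rw [hs2]
    _ = 1 := hcr
  have hts : t ∣ s := orderOf_dvd_of_pow_eq_one hpow
  have hs0 : s ≠ 0 := by omega
  have hH : Higgs3 r := hmH r hr hrd
  have hv2r : (r - 1).factorization 2 ≤ 3 :=
    (higgs_fac hH Nat.prime_two (dvd_trans (by norm_num) h8r)).2
  have hfac : (r - 1).factorization 2 = 1 + s.factorization 2 := by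
    rw [← hs2, Nat.factorization_mul (by norm_num) hs0]
    simp [Nat.Prime.factorization Nat.prime_two]
  have hvts : t.factorization 2 ≤ s.factorization 2 :=
    ((Nat.factorization_le_iff_dvd ht0 hs0).mpr hts) 2
  omega

lemma odd_of_dvd {a b : ℕ} (h : a ∣ b) (hb : Odd b) : Odd a := by
  obtain ⟨c, rfl⟩ := h
  exact (Nat.odd_mul.mp hb).1

lemma mem_S3_of_higgs {r n : ℕ} (hH : Higgs3 r) (hd : n ∣ r - 1) (hr1 : r - 1 ≠ 0) :
    (r - 1) / n ∈ S3 := by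
  set w := (r - 1) / n with hwdef
  have hn0 : n ≠ 0 := by
    rintro rfl
    rw [Nat.eq_zero_of_zero_dvd hd] at hr1
    omega
  have hw : w ∣ r - 1 := Nat.div_dvd_of_dvd hd
  have hw0 : w ≠ 0 := by
    have hmul : n * w = r - 1 := Nat.mul_div_cancel' hd
    intro h0
    rw [h0, mul_zero] at hmul
    omega
  constructor
  · exact Nat.div_pos (Nat.le_of_dvd (by omega) hd) (by omega)
  · intro p hp hpw
    obtain ⟨h1, h2⟩ := higgs_fac hH hp (hpw.trans hw)
    exact ⟨h1, le_trans (((Nat.factorization_le_iff_dvd hw0 hr1).mpr hw) p) h2⟩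

lemma transfer {m q e : ℕ} (hm : m ∈ Hset) (h2m : 2 ∣ m) (hu : Odd (m / 2))
    (hq : q.Prime) (hq2 : q ≠ 2) (he1 : 1 ≤ e) (hqe : q ^ e ∣ m / 2)
    {r : ℕ} (hr : r.Prime) (hrd : (r:ℤ) ∣ (cyclotomic (4 * q ^ e) ℤ).eval 2)
    (hrq : r ≠ q) (hr2 : r ≠ 2) :
    Higgs3 r ∧ 4 * q ^ e ∣ r - 1 ∧ r - 1 ≠ 0 := by
  have hrn : ¬ r ∣ 4 * q ^ e := by
    intro h
    rcases (Nat.Prime.dvd_mul hr).mp h with h | h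
    · have h24 : (4:ℕ) = 2 ^ 2 := by norm_num
      rw [h24] at h
      exact hr2 ((Nat.prime_dvd_prime_iff_eq hr Nat.prime_two).mp (hr.dvd_of_dvd_pow h))
    · exact hrq ((Nat.prime_dvd_prime_iff_eq hr hq).mp (hr.dvd_of_dvd_pow h))
  have hn0 : 0 < 4 * q ^ e := by
    have := Nat.one_le_pow e q hq.pos
    omega
  obtain ⟨hord, hdvd⟩ := order_from_cyclotomic hn0 hr hrd hrn hr2
  have hneg : (2 : ZMod r) ^ (2 * q ^ e) = -1 :=
    pow_half_eq_neg_one hr (Nat.one_le_pow _ _ hq.pos) hord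
  set u := m / 2 with hudef
  have hmu : m = 2 * u := (Nat.mul_div_cancel' h2m).symm
  have hkm : 2 * q ^ e ∣ m := by
    rw [hmu]
    exact mul_dvd_mul_left 2 hqe
  have hodd : Odd (m / (2 * q ^ e)) := by
    have hdiv : m / (2 * q ^ e) = u / q ^ e := by
      rw [hmu, Nat.mul_div_mul_left _ _ (by norm_num)]
    rw [hdiv]
    exact odd_of_dvd (Nat.div_dvd_of_dvd hqe) hu
  have hrK : r ∣ 2 ^ m + 1 := dvd_two_pow_add_one hr hneg hkm hodd
  have hH : Higgs3 r := hm.2 r hr hrK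
  have hr3 : 3 ≤ r := by
    have := hr.two_le
    omega
  exact ⟨hH, hdvd, by omega⟩

lemma exponent_bound {m q : ℕ} (hm : m ∈ Hset) (h2m : 2 ∣ m) (hu : Odd (m / 2))
    (hq : q.Prime) (hq2 : q ≠ 2) (hqu : q ∣ m / 2) : (m / 2).factorization q ≤ 3 := by
  have hu0 : m / 2 ≠ 0 := by
    have h1 := hm.1
    omega
  set e := (m / 2).factorization q with hedef
  have he1 : 1 ≤ e := by
    apply (hq.pow_dvd_iff_le_factorization hu0).mp
    simpa using hqu
  obtain ⟨r, hr, hrd, hrq, hr2⟩ := exists_good_prime hq hq2 he1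
  have hqe : q ^ e ∣ m / 2 := Nat.ordProj_dvd _ q
  obtain ⟨hH, hdvd, hr1⟩ := transfer hm h2m hu hq hq2 he1 hqe hr hrd hrq hr2
  have hqe_r : q ^ e ∣ r - 1 := (dvd_mul_left (q ^ e) 4).trans hdvd
  have h1 : e ≤ (r - 1).factorization q := (hq.pow_dvd_iff_le_factorization hr1).mp hqe_r
  have h3 : (r - 1).factorization q ≤ 3 :=
    (higgs_fac hH hq ((dvd_pow_self q (by omega)).trans hqe_r)).2
  omega

lemma mainstep {m q : ℕ} (hm : m ∈ Hset) (h2m : 2 ∣ m) (hu : Odd (m / 2))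
    (hq : q.Prime) (hq5 : 5 < q) (hqu : q ∣ m / 2) :
    Higgs3 q ∧ 1 ≤ Zfun q := by
  have hq2 : q ≠ 2 := by omega
  have hn : 2 < 4 * q := by omega
  have hΦ1 : 1 < (cyclotomic (4 * q) ℤ).eval 2 := phi_gt_one hn
  set N : ℕ := ((cyclotomic (4 * q) ℤ).eval 2).toNat with hNdef
  have hNΦ : (N : ℤ) = (cyclotomic (4 * q) ℤ).eval 2 := Int.toNat_of_nonneg (by omega)
  have hN1 : 1 < N := by omega
  set r := N.minFac with hrdef
  have hr : r.Prime := Nat.minFac_prime (by omega)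
  have hrN : r ∣ N := Nat.minFac_dvd N
  have hrd : (r : ℤ) ∣ (cyclotomic (4 * q) ℤ).eval 2 := by
    rw [← hNΦ]
    exact_mod_cast hrN
  have hr2 : r ≠ 2 := by
    intro h
    rw [h] at hrd
    exact phi_odd (by omega) hrd
  have hpow1 : 4 * q = 4 * q ^ 1 := by ring
  have hrq : r ≠ q := by
    intro h
    rw [h, hpow1] at hrd
    have h5 : q = 5 := q_dvd_phi_eq_five hq hq2 (le_refl 1) hrd
    omega
  have hrd' : (r : ℤ) ∣ (cyclotomic (4 * q ^ 1) ℤ).eval 2 := by rwa [← hpow1]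
  obtain ⟨hH, hdvd, hr1⟩ :=
    transfer hm h2m hu hq hq2 (le_refl 1) (by simpa using hqu) hr hrd' hrq hr2
  rw [← hpow1] at hdvd
  constructor
  · exact (higgs_fac hH hq ((dvd_mul_left q 4).trans hdvd)).1
  · -- Zfun q ≥ 1
    have hmem : r ∈ {r' : ℕ | r'.Prime ∧ (r' : ℤ) ∣ (cyclotomic (4 * q) ℤ).eval 2 ∧
        (r' - 1) / (4 * q) ∈ S3} := ⟨hr, hrd, mem_S3_of_higgs hH hdvd hr1⟩
    have hfin : {r' : ℕ | r'.Prime ∧ (r' : ℤ) ∣ (cyclotomic (4 * q) ℤ).eval 2 ∧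
        (r' - 1) / (4 * q) ∈ S3}.Finite := by
      apply Set.Finite.subset (Set.finite_Iic N)
      intro x hx
      obtain ⟨hx1, hx2, hx3⟩ := hx
      have : (x : ℤ) ∣ (N : ℤ) := by rwa [hNΦ]
      exact Nat.le_of_dvd (by omega) (by exact_mod_cast this)
    have : 0 < Zfun q := by
      rw [Zfun]
      exact (Set.ncard_pos hfin).mpr ⟨r, hmem⟩
    omega

lemma key_exists (hinf : Heven.Infinite) (T : ℕ) :
    ∃ P : ℕ, T ≤ P ∧ P.Prime ∧ Higgs3 P ∧ 1 ≤ Zfun P := by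
  set N := max T 5 with hNdef
  by_cases hcase : ∃ m ∈ Heven, ∃ q : ℕ, q.Prime ∧ N < q ∧ q ∣ m
  · obtain ⟨m, hmE, q, hq, hqN, hqm⟩ := hcase
    obtain ⟨hmH, h2m⟩ := hmE
    have h4 : ¬ 4 ∣ m := no_four_dvd hmH
    have hmu : m = 2 * (m / 2) := (Nat.mul_div_cancel' h2m).symm
    have hu : Odd (m / 2) := by
      rcases Nat.even_or_odd (m / 2) with he | ho
      · exfalso
        apply h4
        obtain ⟨k, hk⟩ := he
        omega
      · exact ho
    have hqu : q ∣ m / 2 := by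
      have hd : q ∣ 2 * (m / 2) := hmu ▸ hqm
      rcases (Nat.Prime.dvd_mul hq).mp hd with h | h
      · have := Nat.le_of_dvd (by norm_num) h
        omega
      · exact h
    obtain ⟨hH, hZ⟩ := mainstep hmH h2m hu hq (by omega) hqu
    exact ⟨q, by omega, hq, hH, hZ⟩
  · push_neg at hcase
    exfalso
    obtain ⟨m, hmE, hmB⟩ := hinf.exists_gt (2 * (N ^ 3) ^ (N + 1))
    obtain ⟨hmH, h2m⟩ := hmE
    have h4 : ¬ 4 ∣ m := no_four_dvd hmH
    have hmu : m = 2 * (m / 2) := (Nat.mul_div_cancel' h2m).symm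
    have hu : Odd (m / 2) := by
      rcases Nat.even_or_odd (m / 2) with he | ho
      · exfalso
        apply h4
        obtain ⟨k, hk⟩ := he
        omega
      · exact ho
    set u := m / 2 with hudef
    have hu0 : u ≠ 0 := by
      have := hmH.1
      omega
    have hbound : ∀ p ∈ u.primeFactors, p ^ u.factorization p ≤ N ^ 3 := by
      intro p hp
      have hpp : p.Prime := Nat.prime_of_mem_primeFactors hp
      have hpu : p ∣ u := Nat.dvd_of_mem_primeFactors hp
      have hpm : p ∣ m := by
        rw [hmu]
        exact hpu.mul_left 2
      have hpN : p ≤ N := by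
        by_contra hgt
        exact hcase m ⟨hmH, h2m⟩ p hpp (by omega) hpm
      have hp2 : p ≠ 2 := by
        rintro rfl
        rcases hpu with ⟨c, hc⟩
        rw [hc] at hu
        rcases hu with ⟨k, hk⟩
        omega
      have hexp : u.factorization p ≤ 3 := exponent_bound hmH h2m hu hpp hp2 hpu
      calc p ^ u.factorization p ≤ p ^ 3 := Nat.pow_le_pow_right hpp.pos hexp
      _ ≤ N ^ 3 := Nat.pow_le_pow_left hpN 3
    have hcard : u.primeFactors.card ≤ N + 1 := by
      have hsub : u.primeFactors ⊆ Finset.range (N + 1) := by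
        intro p hp
        have hpp : p.Prime := Nat.prime_of_mem_primeFactors hp
        have hpu : p ∣ u := Nat.dvd_of_mem_primeFactors hp
        have hpm : p ∣ m := by
          rw [hmu]
          exact hpu.mul_left 2
        have hpN : p ≤ N := by
          by_contra hgt
          exact hcase m ⟨hmH, h2m⟩ p hpp (by omega) hpm
        exact Finset.mem_range.mpr (by omega)
      simpa using Finset.card_le_card hsub
    have huval : u = ∏ p ∈ u.primeFactors, p ^ u.factorization p := by
      rw [← Nat.support_factorization]
      exact (Nat.factorization_prod_pow_eq_self hu0).symm
    have hule : u ≤ (N ^ 3) ^ (N + 1) := by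
      calc u = ∏ p ∈ u.primeFactors, p ^ u.factorization p := huval
      _ ≤ (N ^ 3) ^ u.primeFactors.card := Finset.prod_le_pow_card _ _ _ hbound
      _ ≤ (N ^ 3) ^ (N + 1) := Nat.pow_le_pow_right (by positivity) hcard
    omega

lemma four_mul_le_two_pow {P : ℕ} (h : 5 ≤ P) : 4 * P ≤ 2 ^ P := by
  induction P, h using Nat.le_induction with
  | base => norm_num
  | succ n hn ih =>
    have h2 : 4 ≤ 2 ^ n := by
      calc 4 ≤ 4 * n := by omega
      _ ≤ 2 ^ n := ih
    calc 4 * (n + 1) = 4 * n + 4 := by ring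
    _ ≤ 2 ^ n + 2 ^ n := by omega
    _ = 2 ^ (n + 1) := by ring


/-- Conditional sharpened reduction: divisor-transference for `Φ_{4p}(2)` together with
sublogarithmic semigroup growth `A(x) = o(log x)` imply that `H_even` is finite. -/
theorem conditional_sharpened_reduction
    (hi : ∃ C : ℝ, 0 < C ∧ ∀ᶠ p : ℕ in atTop, p.Prime → Higgs3 p →
      (Zfun p : ℝ) ≤ C * Afun ((2 : ℝ) ^ (2 * p) / (4 * p)) / p)
    (hii : Afun =o[atTop] Real.log) :
    Heven.Finite := by
  by_contra hfin
  have hinf : Heven.Infinite := hfin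
  obtain ⟨C, hC, hev⟩ := hi
  rw [Filter.eventually_atTop] at hev
  obtain ⟨N₁, hN₁⟩ := hev
  have hsmall := (isLittleO_iff.mp hii) (c := 1 / (4 * C)) (by positivity)
  rw [Filter.eventually_atTop] at hsmall
  obtain ⟨X₀, hX₀⟩ := hsmall
  obtain ⟨T₂, hT₂⟩ := exists_nat_ge X₀
  obtain ⟨P, hPT, hP, hH, hZ⟩ := key_exists hinf (max (max N₁ T₂) 6)
  have hPN₁ : N₁ ≤ P := le_trans (le_trans (le_max_left N₁ T₂) (le_max_left _ 6)) hPT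
  have hPT₂ : T₂ ≤ P := le_trans (le_trans (le_max_right N₁ T₂) (le_max_left _ 6)) hPT
  have hP6 : 6 ≤ P := le_trans (le_max_right _ 6) hPT
  set x : ℝ := (2 : ℝ) ^ (2 * P) / (4 * P) with hxdef
  have hPpos : (0 : ℝ) < P := by positivity
  have h4P : (0 : ℝ) < 4 * (P : ℝ) := by positivity
  have h4le : 4 * (P : ℝ) ≤ 2 ^ P := by
    have := four_mul_le_two_pow (by omega : 5 ≤ P)
    exact_mod_cast this
  have hP2P : (P : ℝ) < 2 ^ P := by
    have := Nat.lt_two_pow_self (n := P)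
    exact_mod_cast this
  have hxeq : x = 2 ^ P * (2 ^ P / (4 * (P : ℝ))) := by
    rw [hxdef, two_mul, pow_add]
    ring
  have hfrac : (1 : ℝ) ≤ 2 ^ P / (4 * (P : ℝ)) := (one_le_div h4P).mpr h4le
  have hxge : (P : ℝ) ≤ x := by
    calc (P : ℝ) ≤ 2 ^ P := hP2P.le
    _ = 2 ^ P * 1 := by ring
    _ ≤ 2 ^ P * (2 ^ P / (4 * (P : ℝ))) := by
        apply mul_le_mul_of_nonneg_left hfrac (by positivity)
    _ = x := hxeq.symm
  have hx1 : (1 : ℝ) ≤ x := le_trans (by exact_mod_cast Nat.one_le_cast.mpr (by omega)) hxge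
  have hxpos : (0 : ℝ) < x := by linarith
  have hxX : X₀ ≤ x := le_trans hT₂ (le_trans (by exact_mod_cast hPT₂) hxge)
  have hA := hX₀ x hxX
  have hA0 : 0 ≤ Afun x := by
    simp only [Afun]
    positivity
  have hlog0 : 0 ≤ Real.log x := Real.log_nonneg hx1
  rw [Real.norm_eq_abs, Real.norm_eq_abs, abs_of_nonneg hA0, abs_of_nonneg hlog0] at hA
  have hxle : x ≤ 2 ^ (2 * P) := by
    rw [hxdef]
    apply div_le_self (by positivity)
    have : (1:ℝ) ≤ (P:ℝ) := by exact_mod_cast Nat.one_le_cast.mpr (by omega)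
    linarith
  have hlog : Real.log x ≤ 2 * (P : ℝ) * Real.log 2 := by
    calc Real.log x ≤ Real.log (2 ^ (2 * P)) := Real.log_le_log hxpos hxle
    _ = ((2 * P : ℕ) : ℝ) * Real.log 2 := Real.log_pow (n := 2 * P) (x := 2)
    _ = 2 * (P : ℝ) * Real.log 2 := by push_cast; ring
  have hZC := hN₁ P hPN₁ hP hH
  have h1Z : (1 : ℝ) ≤ (Zfun P : ℝ) := by exact_mod_cast hZ
  have hchain : (P : ℝ) ≤ C * Afun x := by
    have h1 : (1 : ℝ) ≤ C * Afun x / P := le_trans h1Z hZC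
    have h2 := mul_le_mul_of_nonneg_right h1 hPpos.le
    rwa [one_mul, div_mul_cancel₀ _ hPpos.ne'] at h2
  have hCA : C * Afun x ≤ Real.log x / 4 := by
    have h3 := mul_le_mul_of_nonneg_left hA hC.le
    have heq : C * (1 / (4 * C) * Real.log x) = Real.log x / 4 := by
      field_simp
    rw [heq] at h3
    exact h3
  have hlt : (P : ℝ) * Real.log 2 < (P : ℝ) * 0.6931471808 :=
    mul_lt_mul_of_pos_left Real.log_two_lt_d9 hPpos
  linarith
end
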